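/- arXiv:2208.11755 — 10 statements merged into one kernel-verified Lean document; each statement's English description precedes it below -/
import Mathlib

section
/- Let S be a finitely generated cancellative commutative monoid and B a finitely generated S-graded commutative k-algebra. Then every k-derivation ∂ : B → B decomposes as a finite sum ∂ = Σ ∂_α of M_S-homogeneous derivations ∂_α of degree α ∈ M_S. -/
section Aux

variable {k B M : Type*} [Field k] [CommRing B] [Algebra k B]
  [AddCommGroup M] [DecidableEq M]
  (𝒜 : M → Submodule k B) [GradedAlgebra 𝒜]

open DirectSum

/-- The degree-`α` component of a derivation, as a linear map. -/
noncomputable def homComponentLin (D : Derivation k B B) (α : M) : B →ₗ[k] B :=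
  (DirectSum.toModule k M B (fun m =>
      (𝒜 (m + α)).subtype ∘ₗ (DirectSum.component k M (fun i => 𝒜 i) (m + α)) ∘ₗ
        (DirectSum.decomposeLinearEquiv 𝒜).toLinearMap ∘ₗ D.toLinearMap ∘ₗ (𝒜 m).subtype))
    ∘ₗ (DirectSum.decomposeLinearEquiv 𝒜).toLinearMap

lemma homComponentLin_apply_of_mem (D : Derivation k B B) (α : M) {m : M} {f : B}
    (hf : f ∈ 𝒜 m) :
    homComponentLin 𝒜 D α f = (DirectSum.decompose 𝒜 (D f) (m + α) : B) := by
  have h1 : (DirectSum.decomposeLinearEquiv 𝒜).toLinearMap f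
      = DirectSum.lof k M (fun i => 𝒜 i) m ⟨f, hf⟩ := by
    simp [DirectSum.lof_eq_of, DirectSum.decompose_of_mem 𝒜 hf]
    exact DirectSum.decompose_of_mem 𝒜 hf
  simp only [homComponentLin, LinearMap.comp_apply, h1, DirectSum.toModule_lof]
  rfl

lemma homComponentLin_leibniz (D : Derivation k B B) (α : M) (a b : B) :
    homComponentLin 𝒜 D α (a * b)
      = a * homComponentLin 𝒜 D α b + b * homComponentLin 𝒜 D α a := by
  induction a using DirectSum.Decomposition.inductionOn 𝒜 generalizing b with
  | zero => simp
  | add a₁ a₂ h₁ h₂ =>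
      simp only [add_mul, map_add, h₁, h₂]; ring
  | @homogeneous i a =>
      induction b using DirectSum.Decomposition.inductionOn 𝒜 with
      | zero => simp
      | add b₁ b₂ h₁ h₂ =>
          simp only [mul_add, map_add, h₁, h₂]; ring
      | @homogeneous j b =>
          have hab : (a : B) * (b : B) ∈ 𝒜 (i + j) := SetLike.mul_mem_graded a.2 b.2
          rw [homComponentLin_apply_of_mem 𝒜 D α hab,
            homComponentLin_apply_of_mem 𝒜 D α a.2,
            homComponentLin_apply_of_mem 𝒜 D α b.2]
          have hD : D ((a : B) * (b : B)) = (a : B) * D (b : B) + (b : B) * D (a : B) := by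
            simpa [smul_eq_mul] using D.leibniz (a : B) (b : B)
          rw [hD, DirectSum.decompose_add, DirectSum.add_apply, Submodule.coe_add]
          have h1 : (DirectSum.decompose 𝒜 ((a : B) * D (b : B)) (i + j + α) : B)
              = (a : B) * (DirectSum.decompose 𝒜 (D (b : B)) (j + α) : B) := by
            rw [show i + j + α = i + (j + α) by abel]
            exact DirectSum.coe_decompose_mul_add_of_left_mem 𝒜 a.2
          have h2 : (DirectSum.decompose 𝒜 ((b : B) * D (a : B)) (i + j + α) : B)
              = (b : B) * (DirectSum.decompose 𝒜 (D (a : B)) (i + α) : B) := by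
            rw [show i + j + α = j + (i + α) by abel]
            exact DirectSum.coe_decompose_mul_add_of_left_mem 𝒜 b.2
          rw [h1, h2]

/-- The degree-`α` component of a derivation, as a derivation. -/
noncomputable def homComponent (D : Derivation k B B) (α : M) : Derivation k B B where
  toLinearMap := homComponentLin 𝒜 D α
  map_one_eq_zero' := by
    rw [homComponentLin_apply_of_mem 𝒜 D α (SetLike.one_mem_graded 𝒜)]
    simp
  leibniz' a b := by
    simpa [smul_eq_mul] using homComponentLin_leibniz 𝒜 D α a b

lemma homComponent_apply_of_mem (D : Derivation k B B) (α : M) {m : M} {f : B}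
    (hf : f ∈ 𝒜 m) :
    homComponent 𝒜 D α f = (DirectSum.decompose 𝒜 (D f) (m + α) : B) :=
  homComponentLin_apply_of_mem 𝒜 D α hf

lemma homComponent_mem (D : Derivation k B B) (α : M) {m : M} {f : B} (hf : f ∈ 𝒜 m) :
    homComponent 𝒜 D α f ∈ 𝒜 (m + α) := by
  rw [homComponent_apply_of_mem 𝒜 D α hf]
  exact SetLike.coe_mem _

end Aux

/-- Every derivation of a finitely generated `S`-graded algebra
(`S` a finitely generated cancellative commutative monoid, realized inside its
group of differences `M`) decomposes as a finite sum of `M_S`-homogeneous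
derivations. -/
theorem derivation_decomposes_into_homogeneous
    {k B M : Type*} [Field k] [CharZero k] [CommRing B] [Algebra k B]
    [AddCommGroup M] [DecidableEq M] (S : AddSubmonoid M) (hSfg : S.FG)
    (hgen : ∀ x : M, ∃ a ∈ S, ∃ b ∈ S, x = a - b)
    (𝒜 : M → Submodule k B) [GradedAlgebra 𝒜]
    (hsupp : ∀ m : M, m ∉ S → 𝒜 m = ⊥)
    (hBfg : Algebra.FiniteType k B)
    (D : Derivation k B B) :
    ∃ (A : Finset M) (Dhom : M → Derivation k B B),
      (∀ α ∈ A, ∀ (m : M) (f : B), f ∈ 𝒜 m → Dhom α f ∈ 𝒜 (m + α)) ∧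
      D = ∑ α ∈ A, Dhom α := by
  classical
  obtain ⟨s, hs⟩ := hBfg.out
  -- homogeneous components of the generators
  set T : Finset B :=
    s.biUnion (fun x => (DirectSum.decompose 𝒜 x).support.image
      (fun m => (DirectSum.decompose 𝒜 x m : B))) with hT
  -- the finite set of degrees
  set A : Finset M :=
    s.biUnion (fun x => (DirectSum.decompose 𝒜 x).support.biUnion
      (fun m => (DirectSum.decompose 𝒜 (D (DirectSum.decompose 𝒜 x m : B))).support.image
        (fun β => β - m))) with hA
  refine ⟨A, fun α => homComponent 𝒜 D α, fun α _ m f hf => homComponent_mem 𝒜 D α hf, ?_⟩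
  have hadj : Algebra.adjoin k (T : Set B) = ⊤ := by
    rw [eq_top_iff, ← hs]
    apply Algebra.adjoin_le
    intro x hx
    have : x = ∑ m ∈ (DirectSum.decompose 𝒜 x).support, (DirectSum.decompose 𝒜 x m : B) :=
      (DirectSum.sum_support_decompose 𝒜 x).symm
    rw [this]
    refine Subalgebra.sum_mem _ (fun m hm => Algebra.subset_adjoin ?_)
    exact Finset.mem_biUnion.2 ⟨x, hx, Finset.mem_image.2 ⟨m, hm, rfl⟩⟩
  have hsumapply : ∀ (y : B),
      (∑ α ∈ A, homComponent 𝒜 D α) y = ∑ α ∈ A, homComponent 𝒜 D α y := by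
    intro y
    induction A using Finset.cons_induction with
    | empty => simp
    | cons a t hat ih =>
        rw [Finset.sum_cons, Finset.sum_cons, Derivation.add_apply, ih]
  refine Derivation.ext_of_adjoin_eq_top (T : Set B) hadj ?_
  intro y hy
  obtain ⟨x, hx, m, hm, rfl⟩ : ∃ x ∈ s, ∃ m ∈ (DirectSum.decompose 𝒜 x).support,
      (DirectSum.decompose 𝒜 x m : B) = y := by
    simp only [hT, Finset.coe_biUnion, Set.mem_iUnion, Finset.coe_image, Set.mem_image,
      Finset.mem_coe] at hy
    obtain ⟨x, hx, m, hm, hxy⟩ := hy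
    exact ⟨x, hx, m, hm, hxy⟩
  set y : B := (DirectSum.decompose 𝒜 x m : B) with hydef
  have hymem : y ∈ 𝒜 m := SetLike.coe_mem _
  rw [hsumapply y]
  have heach : ∀ α ∈ A, homComponent 𝒜 D α y = (DirectSum.decompose 𝒜 (D y) (m + α) : B) :=
    fun α _ => homComponent_apply_of_mem 𝒜 D α hymem
  rw [Finset.sum_congr rfl heach]
  have himg : ∑ α ∈ A, (DirectSum.decompose 𝒜 (D y) (m + α) : B)
      = ∑ β ∈ A.image (fun α => m + α), (DirectSum.decompose 𝒜 (D y) β : B) := by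
    rw [Finset.sum_image (fun a _ b _ h => by simpa using h)]
  rw [himg]
  have hsub : (DirectSum.decompose 𝒜 (D y)).support ⊆ A.image (fun α => m + α) := by
    intro β hβ
    have hβA : β - m ∈ A := by
      refine Finset.mem_biUnion.2 ⟨x, hx, Finset.mem_biUnion.2 ⟨m, hm, ?_⟩⟩
      exact Finset.mem_image.2 ⟨β, hβ, rfl⟩
    exact Finset.mem_image.2 ⟨β - m, hβA, by abel⟩
  rw [← Finset.sum_subset hsub (fun β _ hβ => by
    have : DirectSum.decompose 𝒜 (D y) β = 0 := DFinsupp.notMem_support_iff.1 hβ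
    simp [this])]
  exact (DirectSum.sum_support_decompose 𝒜 (D y)).symm
end

section
/- Let S be a finitely generated cancellative commutative monoid with group of differences M, dual group N = Hom(M, ℤ), and dual monoid S* = {u ∈ N : u(m) ≥ 0 for all m ∈ S}. Then the set {m ∈ M : u(m) ≥ 0 for all u ∈ S*} equals the saturation of S in M. -/
open TensorProduct

section Farkas

variable {V : Type*} [AddCommGroup V] [Module ℚ V]

private def coneOf (l : List V) : AddSubmonoid V :=
  AddSubmonoid.closure {x | ∃ q : ℚ, 0 ≤ q ∧ ∃ v ∈ l, x = q • v}

private lemma farkas : ∀ (n : ℕ) (l : List V), l.length = n → ∀ b : V,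
    b ∈ coneOf l ∨ ∃ φ : V →ₗ[ℚ] ℚ, (∀ v ∈ l, 0 ≤ φ v) ∧ φ b < 0 := by
  intro n
  induction n with
  | zero =>
    intro l hl b
    rw [List.length_eq_zero_iff] at hl
    subst hl
    by_cases hb : b = 0
    · exact Or.inl (hb ▸ (coneOf ([] : List V)).zero_mem)
    · right
      have := (Module.forall_dual_apply_eq_zero_iff ℚ b).not.mpr hb
      push_neg at this
      obtain ⟨φ, hφ⟩ := this
      rcases lt_or_gt_of_ne hφ with h | h
      · exact ⟨φ, by simp, h⟩
      · exact ⟨-φ, by simp, by simpa using neg_neg_iff_pos.mpr h⟩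
  | succ n ih =>
    intro l hl b
    match l with
    | a :: t =>
    have ht : t.length = n := by simpa using hl
    rcases ih t ht b with hb | ⟨φ, hφ, hφb⟩
    · left
      refine AddSubmonoid.closure_mono ?_ hb
      rintro x ⟨q, hq, v, hv, rfl⟩
      exact ⟨q, hq, v, List.mem_cons_of_mem a hv, rfl⟩
    · by_cases ha : 0 ≤ φ a
      · right
        refine ⟨φ, ?_, hφb⟩
        intro v hv
        rcases List.mem_cons.mp hv with rfl | hv
        · exact ha
        · exact hφ v hv
      · push_neg at ha
        set t' := t.map (fun v => v - (φ v / φ a) • a) with ht'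
        set b' := b - (φ b / φ a) • a with hb'
        rcases ih t' (by simp [ht', ht]) b' with hmem | ⟨ψ, hψ, hψb⟩
        · left
          have hsub : coneOf t' ≤ coneOf (a :: t) := by
            rw [coneOf, AddSubmonoid.closure_le]
            rintro x ⟨q, hq, v', hv', rfl⟩
            rw [ht', List.mem_map] at hv'
            obtain ⟨v, hv, rfl⟩ := hv'
            have h1 : q • (v - (φ v / φ a) • a)
                = q • v + (q * (-(φ v / φ a))) • a := by
              rw [smul_sub, mul_smul, sub_eq_add_neg]; rw [neg_smul (φ v / φ a), smul_neg, ← smul_neg]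
            rw [h1]
            refine add_mem (AddSubmonoid.subset_closure ⟨q, hq, v, List.mem_cons_of_mem a hv, rfl⟩)
              (AddSubmonoid.subset_closure ⟨q * (-(φ v / φ a)), ?_, a, List.mem_cons_self, rfl⟩)
            have : φ v / φ a ≤ 0 := div_nonpos_of_nonneg_of_nonpos (hφ v hv) ha.le
            exact mul_nonneg hq (neg_nonneg.mpr this)
          have hb0 : b = b' + (φ b / φ a) • a := by rw [hb']; abel
          rw [hb0]
          refine add_mem (hsub hmem) (AddSubmonoid.subset_closure
            ⟨φ b / φ a, le_of_lt (div_pos_of_neg_of_neg hφb ha), a, List.mem_cons_self, rfl⟩)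
        · right
          refine ⟨ψ - (ψ a / φ a) • φ, ?_, ?_⟩
          · intro v hv
            rcases List.mem_cons.mp hv with rfl | hv
            · simp only [LinearMap.sub_apply, LinearMap.smul_apply, smul_eq_mul]
              rw [div_mul_cancel₀ _ (ne_of_lt ha)]
              simp
            · have h2 : ψ (v - (φ v / φ a) • a) ≥ 0 :=
                hψ _ (by rw [ht', List.mem_map]; exact ⟨v, hv, rfl⟩)
              simp only [map_sub, map_smul, smul_eq_mul] at h2
              simp only [LinearMap.sub_apply, LinearMap.smul_apply, smul_eq_mul]
              calc (0:ℚ) ≤ ψ v - φ v / φ a * ψ a := h2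
                _ = ψ v - ψ a / φ a * φ v := by ring
          · have h3 : ψ b' < 0 := hψb
            simp only [hb', map_sub, map_smul, smul_eq_mul] at h3
            simp only [LinearMap.sub_apply, LinearMap.smul_apply, smul_eq_mul]
            calc ψ b - ψ a / φ a * φ b = ψ b - φ b / φ a * ψ a := by ring
              _ < 0 := h3

end Farkas

section Torsion

variable {M : Type*} [AddCommGroup M]

private lemma smul_one_tmul (n : ℕ) (x : M) :
    (n : ℚ) • ((1:ℚ) ⊗ₜ[ℤ] x) = (1:ℚ) ⊗ₜ[ℤ] (n • x) := by
  rw [← natCast_zsmul x n, tmul_smul, ← Int.cast_smul_eq_zsmul ℚ]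
  norm_num

private lemma zsmul_one_tmul (n : ℤ) (x : M) :
    ((n:ℚ)) • ((1:ℚ) ⊗ₜ[ℤ] x) = (1:ℚ) ⊗ₜ[ℤ] (n • x) := by
  rw [tmul_smul, ← Int.cast_smul_eq_zsmul ℚ]

private lemma rat_flat : Module.Flat ℤ ℚ := IsLocalization.flat ℚ (nonZeroDivisors ℤ)

private lemma tmul_eq_zero_torsion {x : M} (h : (1:ℚ) ⊗ₜ[ℤ] x = 0) :
    ∃ k : ℕ, 0 < k ∧ k • x = 0 := by
  by_contra hc
  push_neg at hc
  have hinj : Function.Injective (LinearMap.toSpanSingleton ℤ M x) := by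
    intro a b hab
    by_contra hne
    have hsub : (a - b) • x = 0 := by
      have : a • x = b • x := hab
      rw [sub_smul, this, sub_self]
    have habs : ((a-b).natAbs : ℤ) • x = 0 := by
      rcases Int.natAbs_eq (a - b) with he | he
      · rw [← he]; exact hsub
      · rw [he, neg_smul, neg_eq_zero] at hsub; exact hsub
    have hpos : 0 < (a - b).natAbs := Int.natAbs_pos.mpr (sub_ne_zero.mpr hne)
    exact hc _ hpos (by rwa [natCast_zsmul] at habs)
  haveI := rat_flat
  have h2 := Module.Flat.lTensor_preserves_injective_linearMap
    (M := ℚ) (LinearMap.toSpanSingleton ℤ M x) hinj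
  have h3 : (LinearMap.toSpanSingleton ℤ M x).lTensor ℚ ((1:ℚ) ⊗ₜ[ℤ] (1:ℤ)) = 0 := by
    simp [LinearMap.lTensor_tmul, LinearMap.toSpanSingleton_apply, h]
  have h4 : ((1:ℚ) ⊗ₜ[ℤ] (1:ℤ)) = (0 : ℚ ⊗[ℤ] ℤ) := by
    apply h2
    simpa using h3
  have := congrArg (TensorProduct.rid ℤ ℚ) h4
  simp at this

end Torsion

/-- For a finitely generated cancellative commutative monoid `S`
inside its group of differences `M`, the set of elements of `M` that are
nonnegative on the dual monoid `S* ⊆ Hom(M,ℤ)` equals the saturation of `S`. -/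
theorem dual_dual_eq_saturation
    {M : Type*} [AddCommGroup M] (S : AddSubmonoid M) (hSfg : S.FG)
    (hgen : ∀ x : M, ∃ a ∈ S, ∃ b ∈ S, x = a - b) :
    {m : M | ∀ u : M →+ ℤ, (∀ s ∈ S, 0 ≤ u s) → 0 ≤ u m}
      = {m : M | ∃ c : ℕ, 0 < c ∧ c • m ∈ S} := by
  apply Set.eq_of_subset_of_subset
  · -- hard direction
    intro m hm
    obtain ⟨F, hF⟩ := hSfg
    have hFS : (F : Set M) ⊆ (S : Set M) := hF ▸ AddSubmonoid.subset_closure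
    set ι : M → ℚ ⊗[ℤ] M := fun x => (1:ℚ) ⊗ₜ[ℤ] x with hι
    set l : List (ℚ ⊗[ℤ] M) := F.toList.map ι with hldef
    rcases farkas l.length l rfl (ι m) with hmem | ⟨φ, hφ, hφm⟩
    · -- m ⊗ 1 in the cone: extract a positive multiple in S
      set T : AddSubmonoid (ℚ ⊗[ℤ] M) :=
        { carrier := {v | ∃ n : ℕ, 0 < n ∧ ∃ s ∈ S, (n:ℚ) • v = ι s}
          zero_mem' := ⟨1, one_pos, 0, S.zero_mem, by simp [hι, TensorProduct.tmul_zero]⟩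
          add_mem' := by
            rintro v w ⟨n, hn, s, hs, he⟩ ⟨n', hn', s', hs', he'⟩
            refine ⟨n * n', Nat.mul_pos hn hn', n' • s + n • s',
              S.add_mem (AddSubmonoid.nsmul_mem S hs n') (AddSubmonoid.nsmul_mem S hs' n), ?_⟩
            have : ((n * n' : ℕ) : ℚ) • (v + w)
                = (n':ℚ) • ((n:ℚ) • v) + (n:ℚ) • ((n':ℚ) • w) := by
              push_cast
              rw [smul_add, smul_smul, smul_smul, mul_comm (n':ℚ)]
            rw [this, he, he', hι]
            simp only []
            rw [smul_one_tmul, smul_one_tmul, ← TensorProduct.tmul_add] } with hT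
      have hle : coneOf l ≤ T := by
        rw [coneOf, AddSubmonoid.closure_le]
        rintro x ⟨q, hq, v, hv, rfl⟩
        rw [hldef, List.mem_map] at hv
        obtain ⟨f, hf, rfl⟩ := hv
        have hfS : f ∈ S := hFS (Finset.mem_toList.mp hf)
        refine ⟨q.den, q.pos, q.num.toNat • f, AddSubmonoid.nsmul_mem S hfS _, ?_⟩
        rw [smul_smul, hι]
        simp only []
        rw [← smul_one_tmul]
        congr 1
        rw [mul_comm, Rat.mul_den_eq_num]
        exact_mod_cast (Int.toNat_of_nonneg (Rat.num_nonneg.mpr hq)).symm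
      obtain ⟨n, hn, s, hs, he⟩ := hle hmem
      rw [hι] at he
      simp only [] at he
      rw [smul_one_tmul] at he
      have hz : (1:ℚ) ⊗ₜ[ℤ] (n • m - s) = 0 := by
        rw [TensorProduct.tmul_sub, he, sub_self]
      obtain ⟨k, hk, hks⟩ := tmul_eq_zero_torsion hz
      refine ⟨k * n, Nat.mul_pos hk hn, ?_⟩
      have : (k * n) • m = k • s := by
        rw [mul_smul]
        have := hks
        rw [smul_sub, sub_eq_zero] at this
        rw [this]
      rw [this]
      exact AddSubmonoid.nsmul_mem S hs k
    · -- separating functional: build an integer functional, contradiction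
      exfalso
      set u₀ : M →+ ℚ :=
        { toFun := fun x => φ ((1:ℚ) ⊗ₜ[ℤ] x)
          map_zero' := by
            show φ ((1:ℚ) ⊗ₜ[ℤ] (0:M)) = 0
            rw [TensorProduct.tmul_zero, map_zero]
          map_add' := fun x y => by
            show φ ((1:ℚ) ⊗ₜ[ℤ] (x + y)) = φ ((1:ℚ) ⊗ₜ[ℤ] x) + φ ((1:ℚ) ⊗ₜ[ℤ] y)
            rw [TensorProduct.tmul_add, map_add] } with hu₀
      have hu₀F : ∀ f ∈ F, 0 ≤ u₀ f := by
        intro f hf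
        exact hφ (ι f) (by rw [hldef, List.mem_map]; exact ⟨f, Finset.mem_toList.mpr hf, rfl⟩)
      have hu₀S : ∀ s ∈ S, 0 ≤ u₀ s := by
        have : S ≤ { carrier := {x | 0 ≤ u₀ x}
                     zero_mem' := by simp
                     add_mem' := fun {x y} hx hy => by
                       simp only [Set.mem_setOf_eq, map_add] at *; positivity } := by
          rw [← hF, AddSubmonoid.closure_le]
          intro f hf; exact hu₀F f hf
        exact this
      set d : ℕ := ∏ f ∈ F, (u₀ f).den with hd
      have hdpos : 0 < d := Finset.prod_pos (fun f _ => (u₀ f).pos)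
      have hA : ∀ x : M, ∃ k : ℤ, (k : ℚ) = (d:ℚ) * u₀ x := by
        set A : AddSubgroup M :=
          { carrier := {x | ∃ k : ℤ, (k : ℚ) = (d:ℚ) * u₀ x}
            zero_mem' := ⟨0, by simp⟩
            add_mem' := by
              rintro x y ⟨k, hk⟩ ⟨k', hk'⟩
              exact ⟨k + k', by push_cast; rw [map_add, mul_add, hk, hk']⟩
            neg_mem' := by
              rintro x ⟨k, hk⟩
              exact ⟨-k, by push_cast; rw [map_neg, mul_neg, hk]⟩ } with hAdef
        have hFA : ∀ f ∈ F, f ∈ A := by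
          intro f hf
          obtain ⟨e, he⟩ := Finset.dvd_prod_of_mem (fun f => (u₀ f).den) hf
          refine ⟨(e : ℤ) * (u₀ f).num, ?_⟩
          push_cast
          rw [← Rat.mul_den_eq_num, hd, he]
          push_cast
          ring
        have hSA : ∀ s ∈ S, s ∈ A := by
          have : S ≤ A.toAddSubmonoid := by
            rw [← hF, AddSubmonoid.closure_le]
            intro f hf; exact hFA f hf
          exact fun s hs => this hs
        intro x
        obtain ⟨a, ha, b, hb, rfl⟩ := hgen x
        exact A.sub_mem (hSA a ha) (hSA b hb)
      set u : M →+ ℤ :=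
        { toFun := fun x => (hA x).choose
          map_zero' := by
            show (hA (0:M)).choose = 0
            have h0 : (((hA (0:M)).choose : ℤ) : ℚ) = 0 := by
              rw [(hA 0).choose_spec]; simp
            exact_mod_cast h0
          map_add' := fun x y => by
            have hx := (hA x).choose_spec
            have hy := (hA y).choose_spec
            have hxy := (hA (x + y)).choose_spec
            show (hA (x+y)).choose = (hA x).choose + (hA y).choose
            have : ((hA (x+y)).choose : ℚ) = (((hA x).choose + (hA y).choose : ℤ) : ℚ) := by
              rw [hxy, map_add, mul_add]
              push_cast
              rw [hx, hy]
            exact_mod_cast this } with hu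
      have hus : ∀ s ∈ S, 0 ≤ u s := by
        intro s hs
        have hspec := (hA s).choose_spec
        have : (0:ℚ) ≤ ((hA s).choose : ℚ) := by
          rw [hspec]
          exact mul_nonneg (by positivity) (hu₀S s hs)
        exact_mod_cast this
      have hum := hm u hus
      have hspec := (hA m).choose_spec
      have h1 : (0:ℚ) ≤ ((hA m).choose : ℚ) := by exact_mod_cast hum
      rw [hspec] at h1
      have h2 : u₀ m < 0 := hφm
      have h3 : (0:ℚ) < (d:ℚ) := by exact_mod_cast hdpos
      nlinarith
  · -- easy direction
    rintro m ⟨c, hc, hcm⟩ u hu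
    have h := hu _ hcm
    rw [map_nsmul, nsmul_eq_mul] at h
    have hc' : (0:ℤ) < c := by exact_mod_cast hc
    nlinarith
end

section
/- Let S be a finitely generated cancellative commutative monoid with group M and saturation S^sat. If α ∈ M with α ∉ S^sat, then for every m ∈ S there exists a positive integer ℓ such that m + ℓα ∉ S. -/
/-- Every element of the closure of a finite set `T` is a finite ℕ-combination
of the elements of `T`. -/
lemma exists_combination_of_mem_closure {M : Type*} [AddCommGroup M] (T : Finset M)
    {x : M} (hx : x ∈ AddSubmonoid.closure (↑T : Set M)) :
    ∃ g : {y // y ∈ T} → ℕ, x = ∑ t : {y // y ∈ T}, g t • (t : M) := by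
  classical
  induction hx using AddSubmonoid.closure_induction with
  | mem y hy =>
      refine ⟨Pi.single (⟨y, hy⟩ : {y // y ∈ T}) 1, ?_⟩
      rw [Finset.sum_eq_single (⟨y, hy⟩ : {y // y ∈ T})]
      · simp
      · intro b _ hb; simp [Pi.single_apply, hb]
      · simp
  | zero => exact ⟨0, by simp⟩
  | add a b _ _ ha hb =>
      obtain ⟨g1, hg1⟩ := ha
      obtain ⟨g2, hg2⟩ := hb
      exact ⟨g1 + g2, by simp [hg1, hg2, add_smul, Finset.sum_add_distrib]⟩

/-- If `α ∈ M = M_S` is not in the saturation of the finitely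
generated cancellative commutative monoid `S`, then for every `m ∈ S` there is
a positive integer `ℓ` with `m + ℓ•α ∉ S`. -/
theorem exists_multiple_escaping_monoid
    {M : Type*} [AddCommGroup M] (S : AddSubmonoid M) (hSfg : S.FG)
    (hgen : ∀ x : M, ∃ a ∈ S, ∃ b ∈ S, x = a - b)
    (α : M) (hα : ¬ ∃ c : ℕ, 0 < c ∧ c • α ∈ S) :
    ∀ m ∈ S, ∃ ℓ : ℕ, 0 < ℓ ∧ m + ℓ • α ∉ S := by
  classical
  intro m hm
  by_contra hcon
  push_neg at hcon
  obtain ⟨T, hT⟩ := hSfg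
  have hmem : ∀ n : ℕ, m + (n + 1) • α ∈ AddSubmonoid.closure (↑T : Set M) := by
    intro n; rw [hT]; exact hcon (n + 1) n.succ_pos
  choose g hg using fun n => exists_combination_of_mem_closure T (hmem n)
  -- Dickson's lemma
  obtain ⟨i, j, hij, hle⟩ :=
    (Set.isPWO_of_wellQuasiOrderedLE (Set.univ : Set ({y // y ∈ T} →₀ ℕ))).exists_lt
      (f := fun n => Finsupp.equivFunOnFinite.symm (g n)) (fun _ => Set.mem_univ _)
  have hle' : ∀ t : {y // y ∈ T}, g i t ≤ g j t := fun t => hle t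
  -- the difference is a positive multiple of α lying in S
  have hsum : ∑ t : {y // y ∈ T}, g i t • (t : M)
      + ∑ t : {y // y ∈ T}, (g j t - g i t) • (t : M)
      = ∑ t : {y // y ∈ T}, g j t • (t : M) := by
    rw [← Finset.sum_add_distrib]
    refine Finset.sum_congr rfl fun t _ => ?_
    rw [← add_smul, Nat.add_sub_cancel' (hle' t)]
  have key : (j - i) • α = ∑ t : {y // y ∈ T}, (g j t - g i t) • (t : M) := by
    have h1 : m + (j + 1) • α = (m + (i + 1) • α) + (j - i) • α := by
      rw [add_assoc, ← add_nsmul]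
      congr 2
      omega
    have h2 : (m + (i + 1) • α) + (j - i) • α
        = (m + (i + 1) • α) + ∑ t : {y // y ∈ T}, (g j t - g i t) • (t : M) := by
      rw [← h1, hg j, hg i, ← hsum]
    exact add_left_cancel h2
  refine hα ⟨j - i, by omega, ?_⟩
  rw [key, ← hT]
  exact AddSubmonoid.sum_mem _ fun t _ =>
    AddSubmonoid.nsmul_mem _ (AddSubmonoid.subset_closure t.2) _
end

section
/- Let S be a numerical monoid different from ℤ_{≥0} (i.e., a submonoid S ⊆ ℤ_{≥0} with ℤ_{≥0} \ S finite and nonempty). Then S has no Demazure roots: R(S) = ∅. -/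
/-- The dual monoid `S* = {u ∈ Hom(M,ℤ) : u(m) ≥ 0 for all m ∈ S}`. -/
def dualMonoid {M : Type*} [AddCommGroup M] (S : AddSubmonoid M) :
    AddSubmonoid (M →+ ℤ) where
  carrier := {u | ∀ m ∈ S, 0 ≤ u m}
  zero_mem' := fun m _ => by simp
  add_mem' := fun {u v} hu hv m hm => by
    simpa using add_nonneg (hu m hm) (hv m hm)

/-- `F` is a face of the commutative monoid `S`: a submonoid such that
`a + b ∈ F` with `a, b ∈ S` forces `a, b ∈ F`. -/
def IsMonoidFace {M : Type*} [AddCommMonoid M] (F S : AddSubmonoid M) : Prop :=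
  F ≤ S ∧ ∀ a ∈ S, ∀ b ∈ S, a + b ∈ F → a ∈ F ∧ b ∈ F

/-- `ρ` is the primitive generator of a ray of the dual monoid `S*`,
i.e. the submonoid generated by `ρ` is a face of `S*` isomorphic to `ℤ≥0`. -/
def IsRayGen {M : Type*} [AddCommGroup M] (S : AddSubmonoid M) (ρ : M →+ ℤ) : Prop :=
  ρ ≠ 0 ∧ IsMonoidFace (AddSubmonoid.closure {ρ}) (dualMonoid S)

/-- `α ∈ M = M_S` is a Demazure root of the cancellative monoid `S` with
distinguished ray `ρ ∈ S*(1)`. -/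
def IsDemazureRoot {M : Type*} [AddCommGroup M] (S : AddSubmonoid M)
    (ρ : M →+ ℤ) (α : M) : Prop :=
  IsRayGen S ρ ∧ ρ α = -1 ∧ ∀ m ∈ S, 0 < ρ m → m + α ∈ S

/-- A numerical monoid different from `ℤ≥0` has no Demazure
roots. -/
theorem numerical_monoid_no_demazure_roots
    (S : AddSubmonoid ℤ) (hpos : ∀ m ∈ S, 0 ≤ m)
    (hfin : {n : ℤ | 0 ≤ n ∧ n ∉ S}.Finite)
    (hne : {n : ℤ | 0 ≤ n ∧ n ∉ S}.Nonempty) :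
    ∀ (α : ℤ) (ρ : ℤ →+ ℤ), ¬ IsDemazureRoot S ρ α := by
  rintro α ρ ⟨⟨hρ0, hle, hface⟩, hα, hroot⟩
  -- ρ is multiplication by c := ρ 1
  set c : ℤ := ρ 1 with hc
  have hmul : ∀ m : ℤ, ρ m = c * m := by
    intro m
    have : ρ (m • (1 : ℤ)) = m • ρ 1 := map_zsmul ρ m 1
    simpa [smul_eq_mul, mul_comm] using this
  -- maximal gap g
  let T : Finset ℤ := hfin.toFinset
  have hTne : T.Nonempty := by simpa [T, Set.Finite.toFinset_nonempty] using hne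
  obtain ⟨g, hgT, hgmax⟩ := T.exists_max_image id hTne
  have hgmem : 0 ≤ g ∧ g ∉ S := by simpa [T] using hgT
  -- g + 1 ∈ S
  have hg1 : g + 1 ∈ S := by
    by_contra h
    have : g + 1 ∈ T := by
      simp only [T, Set.Finite.mem_toFinset, Set.mem_setOf_eq]
      exact ⟨by linarith [hgmem.1], h⟩
    have := hgmax _ this
    simp only [id] at this
    linarith
  -- ρ ∈ dual monoid, so ρ nonneg on S
  have hρS : ρ ∈ dualMonoid S := hle (AddSubmonoid.subset_closure rfl)
  have hcnn : 0 ≤ c * (g + 1) := by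
    have := hρS (g + 1) hg1
    rwa [hmul] at this
  have hc0 : 0 ≤ c := by nlinarith [hgmem.1]
  -- c * α = -1 forces c = 1
  have hcα : c * α = -1 := by rw [← hmul]; exact hα
  have hc1 : c = 1 := by
    rcases Int.isUnit_iff.mp (IsUnit.of_mul_eq_one (-α) (by rw [mul_neg, hcα, neg_neg])) with h | h
    · exact h
    · omega
  have hα1 : α = -1 := by rw [hc1, one_mul] at hcα; exact hcα
  -- apply root condition to g + 1
  have := hroot (g + 1) hg1 (by rw [hmul, hc1]; linarith [hgmem.1])
  rw [hα1] at this
  have : g ∈ S := by simpa using this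
  exact hgmem.2 this
end

section
/- Let S be a cancellative commutative monoid, α ∈ M_S, and ρ ∈ S*(1) with ρ(α) = -1. Let A be a generating set of S. Then (m' + α ∈ S for all m' ∈ S with ρ(m') > 0) if and only if (m + α ∈ S for all m ∈ A with ρ(m) > 0). -/
/-- For a cancellative monoid `S` generated by `A`, a candidate
root `α` (with `ρ ∈ S*(1)` and `ρ(α) = -1`) satisfies the root condition on
all of `S` iff it satisfies it on the generating set `A`. -/
theorem demazure_root_condition_on_generators
    {M : Type*} [AddCommGroup M] (S : AddSubmonoid M) (A : Set M)
    (hA : AddSubmonoid.closure A = S)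
    (ρ : M →+ ℤ) (hρ : IsRayGen S ρ) (α : M) (hα : ρ α = -1) :
    (∀ m' ∈ S, 0 < ρ m' → m' + α ∈ S) ↔ (∀ m ∈ A, 0 < ρ m → m + α ∈ S) := by
  have hρS : ∀ m ∈ S, 0 ≤ ρ m := fun m hm =>
    hρ.2.1 (AddSubmonoid.subset_closure (Set.mem_singleton ρ)) m hm
  constructor
  · intro h m hm hpos
    exact h m (hA ▸ AddSubmonoid.subset_closure hm) hpos
  · intro h m' hm' hpos
    rw [← hA] at hm'
    induction hm' using AddSubmonoid.closure_induction with
    | mem x hx => exact h x hx hpos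
    | zero => simp at hpos
    | add x y hx hy ihx ihy =>
      have hxS : x ∈ S := hA ▸ hx
      have hyS : y ∈ S := hA ▸ hy
      rcases lt_or_ge 0 (ρ x) with hx0 | hx0
      · have := ihx hx0
        have : (x + α) + y ∈ S := S.add_mem this hyS
        simpa [add_comm, add_left_comm, add_assoc] using this
      · have hy0 : 0 < ρ y := by
          have := hρS x hxS
          have hxy : ρ (x + y) = ρ x + ρ y := map_add ρ x y
          omega
        have := ihy hy0
        have : x + (y + α) ∈ S := S.add_mem hxS this
        simpa [add_comm, add_left_comm, add_assoc] using this
end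

section
/- The Demazure roots of the monoid S = ℤ_{≥0} × ℤ/2ℤ are exactly (-1, 0̄) and (-1, 1̄) in M = ℤ × ℤ/2ℤ. -/
/-- The monoid `S = ℤ≥0 × ℤ/2ℤ` inside `M = ℤ × ℤ/2ℤ`. -/
def Smon : AddSubmonoid (ℤ × ZMod 2) where
  carrier := {p | 0 ≤ p.1}
  zero_mem' := by simp [Set.mem_setOf_eq]
  add_mem' := fun {a b} ha hb => by
    have h : (0:ℤ) ≤ a.1 + b.1 := add_nonneg ha hb
    simpa [Set.mem_setOf_eq] using h


lemma hom_snd_zero (u : (ℤ × ZMod 2) →+ ℤ) (b : ZMod 2) : u (0, b) = 0 := by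
  have h2 : (2 : ℤ) • ((0, b) : ℤ × ZMod 2) = 0 := by
    ext
    · simp
    · show (2 : ℤ) • b = 0
      have h : (2 : ℤ) • b = (2 : ZMod 2) * b := by
        push_cast [zsmul_eq_mul]; ring
      rw [h]
      have : (2 : ZMod 2) = 0 := by decide
      rw [this, zero_mul]
  have h3 := congrArg u h2
  rw [map_zsmul, map_zero, smul_eq_mul] at h3
  omega

lemma hom_eval (u : (ℤ × ZMod 2) →+ ℤ) (p : ℤ × ZMod 2) : u p = p.1 * u (1, 0) := by
  have hp : p = p.1 • ((1, 0) : ℤ × ZMod 2) + (0, p.2) := by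
    ext
    · simp
    · show p.2 = p.1 • (0 : ZMod 2) + p.2
      simp
  nth_rewrite 1 [hp]
  rw [map_add, map_zsmul, hom_snd_zero, smul_eq_mul]
  ring
lemma rho_mem_dual : (AddMonoidHom.fst ℤ (ZMod 2)) ∈ dualMonoid Smon := by
  intro m hm
  exact hm

lemma dual_le_closure (u : (ℤ × ZMod 2) →+ ℤ) (hu : u ∈ dualMonoid Smon) :
    u ∈ AddSubmonoid.closure {AddMonoidHom.fst ℤ (ZMod 2)} := by
  have h1 : (0:ℤ) ≤ u (1, 0) := hu (1, 0) (by show (0:ℤ) ≤ 1; norm_num)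
  rw [AddSubmonoid.mem_closure_singleton]
  refine ⟨(u (1, 0)).toNat, ?_⟩
  ext p
  have := hom_eval u p
  simp only [AddMonoidHom.coe_smul, Pi.smul_apply, AddMonoidHom.coe_fst, smul_eq_mul,
    nsmul_eq_mul]
  rw [this, Int.toNat_of_nonneg h1]
  ring

theorem demazure_roots_of_Zgeq0_times_Zmod2' (α : ℤ × ZMod 2) :
    (∃ ρ : (ℤ × ZMod 2) →+ ℤ, IsDemazureRoot Smon ρ α) ↔
      α = (-1, 0) ∨ α = (-1, 1) := by
  constructor
  · rintro ⟨ρ, ⟨hne, hle, _⟩, hα, _⟩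
    have hρ : ρ ∈ dualMonoid Smon := hle (AddSubmonoid.subset_closure rfl)
    have hc : (0:ℤ) ≤ ρ (1, 0) := hρ (1, 0) (by show (0:ℤ) ≤ 1; norm_num)
    have heval := hom_eval ρ α
    rw [hα] at heval
    have hu : IsUnit (ρ (1, 0)) :=
      IsUnit.of_mul_eq_one (-α.1) (by linarith [heval])
    rcases Int.isUnit_iff.mp hu with h1 | h1
    · have ha1 : α.1 = -1 := by rw [h1] at heval; linarith
      rcases (show ∀ b : ZMod 2, b = 0 ∨ b = 1 from by decide) α.2 with h2 | h2
      · left; exact Prod.ext ha1 h2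
      · right; exact Prod.ext ha1 h2
    · rw [h1] at hc; norm_num at hc
  · intro h
    refine ⟨AddMonoidHom.fst ℤ (ZMod 2), ⟨⟨?_, ?_, ?_⟩, ?_, ?_⟩⟩
    · intro h0
      have := congrArg (fun f : (ℤ × ZMod 2) →+ ℤ => f (1, 0)) h0
      simp at this
    · exact fun u hu => AddSubmonoid.closure_le.mpr
        (Set.singleton_subset_iff.mpr rho_mem_dual) hu
    · exact fun a ha b hb _ => ⟨dual_le_closure a ha, dual_le_closure b hb⟩
    · rcases h with h | h <;> rw [h] <;> rfl
    · intro m hm hpos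
      have hm1 : (0:ℤ) ≤ m.1 := hm
      have hpos' : (0:ℤ) < m.1 := hpos
      show (0:ℤ) ≤ (m + α).1
      have hα1 : α.1 = -1 := by rcases h with h | h <;> rw [h]
      have : (m + α).1 = m.1 + α.1 := rfl
      rw [this, hα1]
      omega
/-- The Demazure roots of `S = ℤ≥0 × ℤ/2ℤ` are exactly
`(-1, 0̄)` and `(-1, 1̄)`. -/
theorem demazure_roots_of_Zgeq0_times_Zmod2 (α : ℤ × ZMod 2) :
    (∃ ρ : (ℤ × ZMod 2) →+ ℤ, IsDemazureRoot Smon ρ α) ↔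
      α = (-1, 0) ∨ α = (-1, 1) := by
  exact demazure_roots_of_Zgeq0_times_Zmod2' α
end

section
/- Let S be a cancellative commutative monoid over a field k of characteristic zero, and ∂ : k[S] → k[S] a homogeneous locally nilpotent derivation. If ∂(f·χ^m) = 0 for some nonzero f ∈ k[S] and m ∈ S, then ∂(χ^m) = 0 and ∂(f) = 0. -/
open Finset

section Aux

variable {k S : Type*} [Field k] [AddCancelCommMonoid S]

private lemma aux_not_zero_divisor (g : AddMonoidAlgebra k S) (m : S) {c : k} (hc : c ≠ 0)
    (h : g * AddMonoidAlgebra.single m c = 0) : g = 0 := by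
  ext x
  have := AddMonoidAlgebra.coeff_mul_single_eq_coeff_mul (x := g) (r := c) (m := m)
      (m₁ := x + m) x (fun a _ => ⟨fun h => add_right_cancel h, fun h => by rw [h]⟩)
  rw [h] at this
  have : g.coeff x * c = 0 := by simpa using this.symm
  simpa [hc] using this

variable (D : Derivation k (AddMonoidAlgebra k S) (AddMonoidAlgebra k S))

private lemma aux_D_add (a b : AddMonoidAlgebra k S) : D (a + b) = D a + D b := map_add D a b

private lemma aux_D_nsmul (c : ℕ) (a : AddMonoidAlgebra k S) : D (c • a) = c • D a := by
  induction c with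
  | zero => simp
  | succ c ih => simp [succ_nsmul, aux_D_add, ih]

private lemma aux_D_sum {ι : Type*} (s : Finset ι) (g : ι → AddMonoidAlgebra k S) :
    D (∑ i ∈ s, g i) = ∑ i ∈ s, D (g i) :=
  map_sum D.toLinearMap g s

private lemma aux_iter_zero (n : ℕ) : (⇑D)^[n] (0 : AddMonoidAlgebra k S) = 0 := by
  induction n with
  | zero => rfl
  | succ n ih => rw [Function.iterate_succ_apply, map_zero, ih]

private lemma aux_D_mul (a b : AddMonoidAlgebra k S) : D (a * b) = D a * b + a * D b := by
  rw [D.leibniz, smul_eq_mul, smul_eq_mul]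
  ring

/-- Iterated Leibniz rule. -/
private lemma aux_leibniz (n : ℕ) (p q : AddMonoidAlgebra k S) :
    (⇑D)^[n] (p * q) =
      ∑ i ∈ range (n + 1), n.choose i • ((⇑D)^[n - i] p * (⇑D)^[i] q) := by
  induction n with
  | zero => simp
  | succ n IH =>
    calc
      (⇑D)^[n + 1] (p * q) =
          D (∑ i ∈ range (n + 1),
              n.choose i • ((⇑D)^[n - i] p * (⇑D)^[i] q)) := by
        rw [Function.iterate_succ_apply', IH]
      _ = (∑ i ∈ range (n + 1),
            n.choose i • ((⇑D)^[n - i + 1] p * (⇑D)^[i] q)) +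
          ∑ i ∈ range (n + 1),
            n.choose i • ((⇑D)^[n - i] p * (⇑D)^[i + 1] q) := by
        rw [aux_D_sum]
        simp_rw [aux_D_nsmul, aux_D_mul, Function.iterate_succ_apply', smul_add,
          sum_add_distrib]
      _ = (∑ i ∈ range (n + 1),
                n.choose (i + 1) • ((⇑D)^[n - i] p * (⇑D)^[i + 1] q)) +
              1 • ((⇑D)^[n + 1] p * (⇑D)^[0] q) +
            ∑ i ∈ range (n + 1), n.choose i • ((⇑D)^[n - i] p * (⇑D)^[i + 1] q) := ?_
      _ = ((∑ i ∈ range (n + 1), n.choose i • ((⇑D)^[n - i] p * (⇑D)^[i + 1] q)) +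
              ∑ i ∈ range (n + 1),
                n.choose (i + 1) • ((⇑D)^[n - i] p * (⇑D)^[i + 1] q)) +
            1 • ((⇑D)^[n + 1] p * (⇑D)^[0] q) := by
        rw [add_comm, add_assoc]
      _ = (∑ i ∈ range (n + 1),
              (n + 1).choose (i + 1) • ((⇑D)^[n + 1 - (i + 1)] p * (⇑D)^[i + 1] q)) +
            1 • ((⇑D)^[n + 1] p * (⇑D)^[0] q) := by
        simp_rw [Nat.choose_succ_succ, Nat.succ_sub_succ, add_smul, sum_add_distrib]
      _ = ∑ i ∈ range (n + 2),
            (n + 1).choose i • ((⇑D)^[n + 1 - i] p * (⇑D)^[i] q) := by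
        rw [sum_range_succ' _ (n + 1), Nat.choose_zero_right, tsub_zero, one_smul]
    congr 1
    refine (sum_range_succ' _ _).trans (congr_arg₂ (· + ·) ?_ ?_)
    · rw [sum_range_succ, Nat.choose_succ_self, zero_smul, add_zero]
      refine sum_congr rfl fun i hi => ?_
      rw [mem_range] at hi
      have : n - (i + 1) + 1 = n - i := by omega
      rw [this]
    · rw [Nat.choose_zero_right, tsub_zero]

end Aux

/-- For a homogeneous locally nilpotent derivation `D` on the
semigroup algebra of a cancellative commutative monoid `S`, if
`D(f·χ^m) = 0` with `f ≠ 0`, then `D(χ^m) = 0` and `D(f) = 0`. -/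
theorem homogeneous_lnd_kernel_factorially_closed_on_monomials
    {k S : Type*} [Field k] [CharZero k] [AddCancelCommMonoid S]
    (D : Derivation k (AddMonoidAlgebra k S) (AddMonoidAlgebra k S))
    (hhom : ∀ m : S, ∃ (m' : S) (c : k),
      D (AddMonoidAlgebra.single m (1 : k)) = AddMonoidAlgebra.single m' c)
    (hlnd : ∀ f : AddMonoidAlgebra k S, ∃ n : ℕ, (⇑D)^[n] f = 0)
    (f : AddMonoidAlgebra k S) (hf : f ≠ 0) (m : S)
    (h : D (f * AddMonoidAlgebra.single m (1 : k)) = 0) :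
    D (AddMonoidAlgebra.single m (1 : k)) = 0 ∧ D f = 0 := by
  classical
  set u : AddMonoidAlgebra k S := AddMonoidAlgebra.single m (1 : k) with hu
  -- every iterate of D on u is a monomial
  have hmono : ∀ n : ℕ, ∃ (m' : S) (c : k), (⇑D)^[n] u = AddMonoidAlgebra.single m' c := by
    intro n
    induction n with
    | zero => exact ⟨m, 1, rfl⟩
    | succ n ih =>
      obtain ⟨m', c, hc⟩ := ih
      obtain ⟨m'', c', hc'⟩ := hhom m'
      refine ⟨m'', c * c', ?_⟩
      rw [Function.iterate_succ_apply', hc,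
        show AddMonoidAlgebra.single m' c = c • AddMonoidAlgebra.single m' (1 : k) by
          rw [AddMonoidAlgebra.smul_single', mul_one],
        D.map_smul, hc', AddMonoidAlgebra.smul_single']
  have hu0 : u ≠ 0 := by
    intro h0
    have := AddMonoidAlgebra.single_eq_zero.mp h0
    exact one_ne_zero this
  -- minimal nilpotency indices
  have hN : ∃ n, (⇑D)^[n] u = 0 := hlnd u
  have hM : ∃ n, (⇑D)^[n] f = 0 := hlnd f
  set N := Nat.find hN with hNdef
  set M := Nat.find hM with hMdef
  have hNspec : (⇑D)^[N] u = 0 := Nat.find_spec hN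
  have hMspec : (⇑D)^[M] f = 0 := Nat.find_spec hM
  have hN1 : 1 ≤ N := by
    rcases Nat.eq_zero_or_pos N with h0 | h1
    · exfalso; apply hu0; rw [← hNspec, h0]; rfl
    · exact h1
  have hM1 : 1 ≤ M := by
    rcases Nat.eq_zero_or_pos M with h0 | h1
    · exfalso; apply hf; rw [← hMspec, h0]; rfl
    · exact h1
  have hNmin : (⇑D)^[N - 1] u ≠ 0 := Nat.find_min hN (by omega)
  have hMmin : (⇑D)^[M - 1] f ≠ 0 := Nat.find_min hM (by omega)
  -- key claim: D u = 0, i.e. N = 1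
  have hDu : D u = 0 := by
    by_contra hDu
    have hN2 : 2 ≤ N := by
      rcases Nat.lt_or_ge N 2 with h2 | h2
      · exfalso
        interval_cases N
        exact hDu (by simpa using hNspec)
      · exact h2
    set n := (M - 1) + (N - 1) with hn
    have hn1 : 1 ≤ n := by omega
    have hiter : (⇑D)^[n] (f * u) = 0 := by
      rw [show n = (n - 1) + 1 by omega, Function.iterate_succ_apply, h, aux_iter_zero]
    rw [aux_leibniz] at hiter
    -- all terms vanish except i = N - 1
    have hsum : ∑ i ∈ range (n + 1), n.choose i • ((⇑D)^[n - i] f * (⇑D)^[i] u)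
        = n.choose (N - 1) • ((⇑D)^[n - (N - 1)] f * (⇑D)^[N - 1] u) := by
      refine Finset.sum_eq_single (N - 1) (fun i hi hne => ?_) (fun habs => ?_)
      · rw [mem_range] at hi
        rcases Nat.lt_or_ge i (N - 1) with hlt | hge
        · -- n - i ≥ M, so D^[n-i] f = 0
          have : (⇑D)^[n - i] f = 0 := by
            have hle : M ≤ n - i := by omega
            rw [show n - i = (n - i - M) + M by omega, Function.iterate_add_apply, hMspec,
              aux_iter_zero]
          rw [this, zero_mul, smul_zero]
        · -- i ≥ N, so D^[i] u = 0
          have hge' : N ≤ i := by omega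
          have : (⇑D)^[i] u = 0 := by
            rw [show i = (i - N) + N by omega, Function.iterate_add_apply, hNspec,
              aux_iter_zero]
          rw [this, mul_zero, smul_zero]
      · exfalso; rw [mem_range] at habs; omega
    rw [hsum] at hiter
    have hne : (n.choose (N - 1) : k) ≠ 0 := by
      have : 0 < n.choose (N - 1) := Nat.choose_pos (by omega)
      exact_mod_cast this.ne'
    have hprod : (⇑D)^[n - (N - 1)] f * (⇑D)^[N - 1] u = 0 := by
      have := hiter
      rw [← Nat.cast_smul_eq_nsmul k] at this
      rcases smul_eq_zero.mp this with hc | hx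
      · exact absurd hc hne
      · exact hx
    have hnN : n - (N - 1) = M - 1 := by omega
    rw [hnN] at hprod
    obtain ⟨m', c, hc⟩ := hmono (N - 1)
    have hc0 : c ≠ 0 := by
      intro h0
      apply hNmin
      rw [hc, h0]
      simp
    rw [hc] at hprod
    exact hMmin (aux_not_zero_divisor _ _ hc0 hprod)
  refine ⟨hDu, ?_⟩
  have : D f * u = 0 := by
    have := aux_D_mul D f u
    rw [h, hDu, mul_zero, add_zero] at this
    exact this.symm
  exact aux_not_zero_divisor _ _ one_ne_zero this
end

section
/- Let S be a cancellative commutative monoid over a field k of characteristic zero, and ∂ : k[S] → k[S] a homogeneous locally nilpotent derivation. Then ker ∂ = k[F] for some face F of S. -/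
open Finset Nat

/-- Iterated Leibniz rule for derivations. -/
theorem my_iterate_mul {R A : Type*} [CommRing R] [CommRing A] [Algebra R A]
    (D : Derivation R A A) (n : ℕ) (a b : A) :
    (⇑D)^[n] (a * b) =
      ∑ ij ∈ antidiagonal n, n.choose ij.1 • ((⇑D)^[ij.1] a * (⇑D)^[ij.2] b) := by
  induction n with
  | zero => simp
  | succ n ih =>
    rw [sum_antidiagonal_choose_succ_nsmul (M := A) (fun i j => (⇑D)^[i] a * (⇑D)^[j] b) n]
    simp only [Function.iterate_succ_apply', ih, map_sum, map_nsmul, Derivation.leibniz,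
      smul_eq_mul, smul_add, sum_add_distrib, add_right_inj]
    · refine sum_congr rfl fun ⟨i, j⟩ hij ↦ ?_
      rw [n.choose_symm_of_eq_add (mem_antidiagonal.1 hij).symm]
      ring_nf

/-- The kernel of a homogeneous locally nilpotent derivation of
the semigroup algebra of a cancellative commutative monoid `S` is `k[F]` for a
face `F` of `S`: an element lies in the kernel iff its support lies in `F`. -/
theorem kernel_of_homogeneous_lnd_is_face_algebra
    {k S : Type*} [Field k] [CharZero k] [AddCancelCommMonoid S]
    (D : Derivation k (AddMonoidAlgebra k S) (AddMonoidAlgebra k S))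
    (hhom : ∀ m : S, ∃ (m' : S) (c : k),
      D (AddMonoidAlgebra.single m (1 : k)) = AddMonoidAlgebra.single m' c)
    (hlnd : ∀ f : AddMonoidAlgebra k S, ∃ n : ℕ, (⇑D)^[n] f = 0) :
    ∃ F : AddSubmonoid S,
      (∀ a b : S, a + b ∈ F → a ∈ F ∧ b ∈ F) ∧
      (∀ f : AddMonoidAlgebra k S, D f = 0 ↔ ∀ m ∈ f.coeff.support, m ∈ F) := by
  classical
  choose nxt c hc using hhom
  -- defeq helpers to avoid `AddMonoidAlgebra` vs `Finsupp` rewriting issues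
  have sgl0 : ∀ x : S, AddMonoidAlgebra.single x (0 : k) = 0 := fun x =>
    AddMonoidAlgebra.single_zero x
  have sglz : ∀ (x : S) (v : k), AddMonoidAlgebra.single x v = 0 → v = 0 := fun x v h =>
    AddMonoidAlgebra.single_eq_zero.mp h
  have sglnz : ∀ (x : S) (v : k), v ≠ 0 → AddMonoidAlgebra.single x v ≠ 0 :=
    fun x v h hz => h (sglz x v hz)
  have sapp : ∀ (x y : S) (v : k),
      (AddMonoidAlgebra.single x v).coeff y = if x = y then v else 0 := fun x y v =>
    Finsupp.single_apply
  have aapp : ∀ (f g : AddMonoidAlgebra k S) (y : S), (f + g).coeff y = f.coeff y + g.coeff y :=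
    fun f g y => rfl
  have zapp : ∀ y : S, (0 : AddMonoidAlgebra k S).coeff y = 0 := fun y => rfl
  have evalf : ∀ (x y : AddMonoidAlgebra k S), x = y → ∀ s : S, x.coeff s = y.coeff s :=
    fun x y h s => by rw [h]
  have sumapp : ∀ (s : Finset S) (g : S → AddMonoidAlgebra k S) (y : S),
      (∑ m ∈ s, g m).coeff y = ∑ m ∈ s, (g m).coeff y := fun s g y => by
      rw [AddMonoidAlgebra.coeff_sum, Finsupp.finset_sum_apply]
  -- D on general monomials
  have hDsingle : ∀ (m : S) (α : k), D (AddMonoidAlgebra.single m α) =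
      AddMonoidAlgebra.single (nxt m) (α * c m) := by
    intro m α
    have h : AddMonoidAlgebra.single m α = α • AddMonoidAlgebra.single m (1 : k) := by
      rw [AddMonoidAlgebra.smul_single', mul_one]
    rw [h, D.map_smul, hc, AddMonoidAlgebra.smul_single']
  -- Leibniz on monomials
  have key : ∀ a b : S, AddMonoidAlgebra.single (nxt (a + b)) (c (a + b)) =
      AddMonoidAlgebra.single (a + nxt b) (c b) +
      AddMonoidAlgebra.single (nxt a + b) (c a) := by
    intro a b
    have h1 : (AddMonoidAlgebra.single (a + b) (1 : k)) =
        AddMonoidAlgebra.single a (1 : k) * AddMonoidAlgebra.single b (1 : k) := by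
      rw [AddMonoidAlgebra.single_mul_single, one_mul]
    calc AddMonoidAlgebra.single (nxt (a + b)) (c (a + b))
        = D (AddMonoidAlgebra.single (a + b) (1 : k)) := (hc _).symm
      _ = AddMonoidAlgebra.single a (1:k) • D (AddMonoidAlgebra.single b (1:k)) +
          AddMonoidAlgebra.single b (1:k) • D (AddMonoidAlgebra.single a (1:k)) := by
          rw [h1, Derivation.leibniz]
      _ = _ := by
          rw [hc, hc, smul_eq_mul, smul_eq_mul, AddMonoidAlgebra.single_mul_single,
            AddMonoidAlgebra.single_mul_single, one_mul, one_mul, add_comm b (nxt a)]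
  -- c 0 = 0
  have hzero : c 0 = 0 := by
    have h1 : D (AddMonoidAlgebra.single (0:S) (1:k)) = 0 := by
      have h2 : (AddMonoidAlgebra.single (0:S) (1:k)) = 1 := rfl
      rw [h2]; exact D.map_one_eq_zero
    rw [hc] at h1
    exact sglz _ _ h1
  -- additivity of the zero set
  have hadd : ∀ a b : S, c a = 0 → c b = 0 → c (a + b) = 0 := by
    intro a b ha hb
    have h := key a b
    rw [ha, hb, sgl0, sgl0, add_zero] at h
    exact sglz _ _ h
  -- degree shift is "constant": injectivity helper
  have hshift : ∀ a b : S, c a ≠ 0 → c b ≠ 0 → a + nxt b = nxt a + b := by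
    intro a b ha hb
    by_contra hne
    have hk := key a b
    have e1 : nxt (a + b) = a + nxt b := by
      by_contra h2
      have h := evalf _ _ hk (a + nxt b)
      rw [aapp, sapp, sapp, sapp, if_neg h2, if_pos rfl,
        if_neg (fun hh : nxt a + b = a + nxt b => hne hh.symm), add_zero] at h
      exact hb h.symm
    have e2 : nxt (a + b) = nxt a + b := by
      by_contra h2
      have h := evalf _ _ hk (nxt a + b)
      rw [aapp, sapp, sapp, sapp, if_neg h2,
        if_neg (fun hh : a + nxt b = nxt a + b => hne hh), if_pos rfl, zero_add] at h
      exact ha h.symm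
    exact hne (e1 ▸ e2)
  -- iterates of D on monomials
  have hiter : ∀ (n : ℕ) (m : S) (α : k), (⇑D)^[n] (AddMonoidAlgebra.single m α) =
      AddMonoidAlgebra.single (nxt^[n] m) (α * ∏ i ∈ range n, c (nxt^[i] m)) := by
    intro n
    induction n with
    | zero => intro m α; simp
    | succ n ih =>
      intro m α
      rw [Function.iterate_succ_apply, hDsingle, ih]
      have hex : nxt^[n] (nxt m) = nxt^[n+1] m := (Function.iterate_succ_apply nxt n m).symm
      have hco : α * c m * ∏ i ∈ range n, c (nxt^[i] (nxt m)) =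
          α * ∏ i ∈ range (n+1), c (nxt^[i] m) := by
        rw [prod_range_succ' (fun i => c (nxt^[i] m)) n]
        simp only [Function.iterate_succ_apply, Function.iterate_zero_apply]
        ring
      rw [hex, hco]
  -- face property
  have hface : ∀ a b : S, c (a + b) = 0 → c a = 0 := by
    intro a b hab
    by_contra ha
    have hb : c b ≠ 0 := by
      intro hb
      have hk := key a b
      rw [hab, hb, sgl0, sgl0, zero_add] at hk
      exact ha (sglz _ _ hk.symm)
    -- degrees
    have hsa : ∃ n, (⇑D)^[n] (AddMonoidAlgebra.single a (1:k)) = 0 := hlnd _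
    have hsb : ∃ n, (⇑D)^[n] (AddMonoidAlgebra.single b (1:k)) = 0 := hlnd _
    set pa : ℕ → k := fun i => ∏ j ∈ range i, c (nxt^[j] a) with hpa_def
    set pb : ℕ → k := fun i => ∏ j ∈ range i, c (nxt^[j] b) with hpb_def
    set Na := Nat.find hsa with hNa_def
    set Nb := Nat.find hsb with hNb_def
    have pa_pos : ∀ i, i < Na → pa i ≠ 0 := by
      intro i hi hz
      refine Nat.find_min hsa hi ?_
      rw [hiter, show (∏ j ∈ range i, c (nxt^[j] a)) = pa i from rfl, hz, mul_zero, sgl0]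
    have pb_pos : ∀ i, i < Nb → pb i ≠ 0 := by
      intro i hi hz
      refine Nat.find_min hsb hi ?_
      rw [hiter, show (∏ j ∈ range i, c (nxt^[j] b)) = pb i from rfl, hz, mul_zero, sgl0]
    have iter_zero : ∀ j : ℕ, (⇑D)^[j] (0 : AddMonoidAlgebra k S) = 0 :=
      fun j => Function.iterate_fixed (map_zero D) j
    have pa_zero : ∀ i, Na ≤ i → pa i = 0 := by
      intro i hi
      have h : (⇑D)^[i] (AddMonoidAlgebra.single a (1:k)) = 0 := by
        rw [show i = (i - Na) + Na from (Nat.sub_add_cancel hi).symm,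
          Function.iterate_add_apply, Nat.find_spec hsa, iter_zero]
      rw [hiter] at h
      have h2 := sglz _ _ h
      rw [one_mul] at h2
      exact h2
    have pb_zero : ∀ i, Nb ≤ i → pb i = 0 := by
      intro i hi
      have h : (⇑D)^[i] (AddMonoidAlgebra.single b (1:k)) = 0 := by
        rw [show i = (i - Nb) + Nb from (Nat.sub_add_cancel hi).symm,
          Function.iterate_add_apply, Nat.find_spec hsb, iter_zero]
      rw [hiter] at h
      have h2 := sglz _ _ h
      rw [one_mul] at h2
      exact h2
    have hNa2 : 1 < Na := by
      rw [hNa_def, Nat.lt_find_iff]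
      intro n hn
      interval_cases n
      · exact fun h => sglnz a 1 one_ne_zero h
      · intro h
        rw [Function.iterate_one, hc] at h
        exact ha (sglz _ _ h)
    have hNb1 : 0 < Nb := by
      rcases Nat.eq_zero_or_pos Nb with h | h
      · exfalso
        have hs := Nat.find_spec hsb
        rw [← hNb_def, h, Function.iterate_zero_apply] at hs
        exact sglnz b 1 one_ne_zero hs
      · exact h
    obtain ⟨p, hp⟩ : ∃ p, Na = p + 1 := ⟨Na - 1, by omega⟩
    obtain ⟨q, hq⟩ : ∃ q, Nb = q + 1 := ⟨Nb - 1, by omega⟩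
    have hp1 : 1 ≤ p := by omega
    have hppos : pa p ≠ 0 := pa_pos p (by omega)
    have hqpos : pb q ≠ 0 := pb_pos q (by omega)
    -- LHS is zero
    have h0 : (⇑D)^[p + q] (AddMonoidAlgebra.single (a + b) (1:k)) = 0 := by
      rw [hiter]
      have hz : (1:k) * ∏ i ∈ range (p + q), c (nxt^[i] (a + b)) = 0 := by
        rw [one_mul]
        refine prod_eq_zero (i := 0) (mem_range.mpr (by omega)) ?_
        rw [Function.iterate_zero_apply, hab]
      rw [hz, sgl0]
    -- RHS reduces to one term
    have h1 : (AddMonoidAlgebra.single (a + b) (1 : k)) =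
        AddMonoidAlgebra.single a (1 : k) * AddMonoidAlgebra.single b (1 : k) := by
      rw [AddMonoidAlgebra.single_mul_single, one_mul]
    have h2 : (⇑D)^[p + q] (AddMonoidAlgebra.single (a + b) (1:k)) =
        ∑ ij ∈ antidiagonal (p + q), (p + q).choose ij.1 •
          (AddMonoidAlgebra.single (nxt^[ij.1] a + nxt^[ij.2] b) (pa ij.1 * pb ij.2)) := by
      rw [h1, my_iterate_mul]
      refine sum_congr rfl fun ⟨i, j⟩ _ => ?_
      rw [hiter, hiter, AddMonoidAlgebra.single_mul_single, one_mul, one_mul]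
    have h3 : ∑ ij ∈ antidiagonal (p + q), (p + q).choose ij.1 •
          (AddMonoidAlgebra.single (nxt^[ij.1] a + nxt^[ij.2] b) (pa ij.1 * pb ij.2)) =
        (p + q).choose p • (AddMonoidAlgebra.single (nxt^[p] a + nxt^[q] b) (pa p * pb q)) := by
      refine sum_eq_single_of_mem (p, q) (mem_antidiagonal.mpr rfl) ?_
      rintro ⟨i, j⟩ hij hne
      have hij' : i + j = p + q := mem_antidiagonal.mp hij
      rcases Nat.lt_or_ge i p with hlt | hge
      · have hj : Nb ≤ j := by omega
        rw [pb_zero j hj, mul_zero, sgl0, smul_zero]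
      · rcases Nat.eq_or_lt_of_le hge with heq | hgt
        · exfalso; apply hne; simp only [Prod.mk.injEq]; omega
        · have hi : Na ≤ i := by omega
          rw [pa_zero i hi, zero_mul, sgl0, smul_zero]
    have h4 : (p + q).choose p •
        (AddMonoidAlgebra.single (nxt^[p] a + nxt^[q] b) (pa p * pb q)) = 0 := by
      rw [← h3, ← h2, h0]
    have h5 : (((p + q).choose p : ℕ) : k) * (pa p * pb q) = 0 := by
      rw [← Nat.cast_smul_eq_nsmul k, AddMonoidAlgebra.smul_single'] at h4
      exact sglz _ _ h4
    have h6 : (((p + q).choose p : ℕ) : k) ≠ 0 :=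
      Nat.cast_ne_zero.mpr (Nat.choose_pos (Nat.le_add_right p q)).ne'
    exact (mul_ne_zero h6 (mul_ne_zero hppos hqpos)) h5
  -- assemble
  refine ⟨{ carrier := {m | c m = 0}, zero_mem' := hzero,
            add_mem' := fun {x y} hx hy => hadd x y hx hy }, ?_, ?_⟩
  · intro a b hab
    exact ⟨hface a b hab, hface b a (by rwa [add_comm] at hab)⟩
  · intro f
    have hf : ∑ m ∈ f.coeff.support, AddMonoidAlgebra.single m (f.coeff m) = f :=
      AddMonoidAlgebra.sum_coeff_single f
    have hDf : D f = ∑ m ∈ f.coeff.support, AddMonoidAlgebra.single (nxt m) (f.coeff m * c m) := by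
      conv_lhs => rw [← hf]
      rw [map_sum]
      exact sum_congr rfl fun m _ => hDsingle m (f.coeff m)
    constructor
    · intro hDf0 m0 hm0
      by_contra hc0
      have hsum : ∑ m ∈ f.coeff.support, AddMonoidAlgebra.single (nxt m) (f.coeff m * c m) = 0 :=
        hDf.symm.trans hDf0
      have h := evalf _ _ hsum (nxt m0)
      rw [sumapp, zapp] at h
      rw [sum_eq_single_of_mem m0 hm0 ?side] at h
      case side =>
        intro m hm hne
        rw [sapp]
        by_cases hcm : c m = 0
        · rw [hcm, mul_zero, ite_self]
        · rw [if_neg]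
          intro heq
          have hsh := hshift m m0 hcm hc0
          rw [heq] at hsh
          have hcan : m + nxt m0 = m0 + nxt m0 := by rw [hsh, add_comm]
          exact hne (add_right_cancel hcan)
      rw [sapp, if_pos rfl] at h
      exact (mul_ne_zero (Finsupp.mem_support_iff.mp hm0) hc0) h
    · intro hsupp
      rw [hDf]
      refine sum_eq_zero fun m hm => ?_
      rw [hsupp m hm, mul_zero, sgl0]
end

section
/- Let S be a cancellative commutative monoid over an algebraically closed field k of characteristic zero, and let ∂ : k[S] → k[S] be a nonzero homogeneous locally nilpotent derivation of degree α. Then α is a Demazure root of S and ∂ = λ∂_α for some λ ∈ k*, where ∂_α(χ^m) = ρ(m)χ^{m+α} for the distinguished ray ρ of α. -/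
set_option linter.unusedSectionVars false

section Aux
open AddMonoidAlgebra

variable {k M : Type*} [Field k] [CharZero k] [AddCommGroup M]
variable (S : AddSubmonoid M) (α : M)
variable (D : Derivation k (AddMonoidAlgebra k S) (AddMonoidAlgebra k S))

open scoped Classical in
/-- the coefficient of `D (χ^m)` at `m+α`. -/
noncomputable def demC (m : S) : k :=
  if h : (m : M) + α ∈ S then (D (AddMonoidAlgebra.single m 1)).coeff ⟨(m:M)+α, h⟩ else 0

variable {S α D}

theorem demD_of_not_mem
    (hhom : ∀ m : S, ∀ x ∈ (D (AddMonoidAlgebra.single m (1 : k))).coeff.support,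
      (x : M) = (m : M) + α)
    (m : S) (h : (m:M)+α ∉ S) :
    D (AddMonoidAlgebra.single m (1:k)) = 0 := by
  rw [← AddMonoidAlgebra.coeff_eq_zero, ← Finsupp.support_eq_empty]
  by_contra hs
  obtain ⟨x, hx⟩ := Finset.nonempty_iff_ne_empty.2 hs
  exact h (hhom m x hx ▸ x.2)

theorem demD_of_mem
    (hhom : ∀ m : S, ∀ x ∈ (D (AddMonoidAlgebra.single m (1 : k))).coeff.support,
      (x : M) = (m : M) + α)
    (m : S) (h : (m:M)+α ∈ S) :
    D (AddMonoidAlgebra.single m (1:k)) =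
      AddMonoidAlgebra.single (⟨(m:M)+α, h⟩ : S) (demC S α D m) := by
  have hsub : (D (AddMonoidAlgebra.single m (1:k))).coeff.support ⊆ {(⟨(m:M)+α, h⟩ : S)} := by
    intro x hx
    simp only [Finset.mem_singleton]
    exact Subtype.ext (hhom m x hx)
  have h2 := Finsupp.support_subset_singleton.1 hsub
  rw [← AddMonoidAlgebra.coeff_inj, h2, AddMonoidAlgebra.coeff_single]
  unfold demC
  rw [dif_pos h]

theorem demC_add
    (hhom : ∀ m : S, ∀ x ∈ (D (AddMonoidAlgebra.single m (1 : k))).coeff.support,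
      (x : M) = (m : M) + α)
    (a b : S) (ha : (a:M)+α ∈ S) (hb : (b:M)+α ∈ S) :
    demC S α D (a+b) = demC S α D a + demC S α D b := by
  have hab : ((a+b : S):M)+α ∈ S := by
    have := S.add_mem a.2 hb
    simpa [add_assoc] using this
  have hmul : AddMonoidAlgebra.single (a+b) (1:k) =
      AddMonoidAlgebra.single a (1:k) * AddMonoidAlgebra.single b (1:k) := by
    rw [AddMonoidAlgebra.single_mul_single, one_mul]
  have hL := demD_of_mem hhom (a+b) hab
  have key : D (AddMonoidAlgebra.single (a+b) (1:k)) =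
      AddMonoidAlgebra.single (⟨((a+b):S) + α, hab⟩ : S) (demC S α D a + demC S α D b) := by
    rw [hmul, Derivation.leibniz, smul_eq_mul, smul_eq_mul,
      demD_of_mem hhom a ha, demD_of_mem hhom b hb,
      AddMonoidAlgebra.single_mul_single, AddMonoidAlgebra.single_mul_single, one_mul, one_mul]
    have e1 : a + (⟨(b:M)+α, hb⟩ : S) = (⟨((a+b):S) + α, hab⟩ : S) := by
      apply Subtype.ext; push_cast; abel
    have e2 : b + (⟨(a:M)+α, ha⟩ : S) = (⟨((a+b):S) + α, hab⟩ : S) := by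
      apply Subtype.ext; push_cast; abel
    rw [e1, e2, ← AddMonoidAlgebra.single_add]
    exact congrArg _ (add_comm _ _)
  rw [hL] at key
  have := congrArg (fun f : AddMonoidAlgebra k S => f.coeff (⟨((a+b):S) + α, hab⟩ : S)) key
  simpa using this


variable (S α D) in
/-- `e(m) = c(m+m₀) - c(m₀)`, the additive extension of `c`. -/
noncomputable def demE (m₀ m : S) : k :=
  demC S α D (m + m₀) - demC S α D m₀

theorem mem_shift {m₀ : S} (hm₀ : (m₀:M)+α ∈ S) (x : S) : ((x + m₀ : S):M)+α ∈ S := by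
  have := S.add_mem x.2 hm₀
  simpa [add_assoc] using this

theorem demE_add
    (hhom : ∀ m : S, ∀ x ∈ (D (AddMonoidAlgebra.single m (1 : k))).coeff.support,
      (x : M) = (m : M) + α)
    {m₀ : S} (hm₀ : (m₀:M)+α ∈ S) (a b : S) :
    demE S α D m₀ (a+b) = demE S α D m₀ a + demE S α D m₀ b := by
  have h1 : demC S α D ((a+m₀) + (b+m₀)) = demC S α D (a+m₀) + demC S α D (b+m₀) :=
    demC_add hhom _ _ (mem_shift hm₀ a) (mem_shift hm₀ b)
  have h2 : demC S α D (((a+b)+m₀) + m₀) = demC S α D ((a+b)+m₀) + demC S α D m₀ :=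
    demC_add hhom _ _ (mem_shift hm₀ (a+b)) hm₀
  have e : (a+m₀) + (b+m₀) = ((a+b)+m₀) + m₀ := by abel
  rw [e, h2] at h1
  unfold demE
  linear_combination h1

theorem demE_eq_demC
    (hhom : ∀ m : S, ∀ x ∈ (D (AddMonoidAlgebra.single m (1 : k))).coeff.support,
      (x : M) = (m : M) + α)
    {m₀ : S} (hm₀ : (m₀:M)+α ∈ S) (m : S) (hm : (m:M)+α ∈ S) :
    demE S α D m₀ m = demC S α D m := by
  unfold demE
  rw [demC_add hhom m m₀ hm hm₀]
  ring

theorem demE_zero_of_not_mem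
    (hhom : ∀ m : S, ∀ x ∈ (D (AddMonoidAlgebra.single m (1 : k))).coeff.support,
      (x : M) = (m : M) + α)
    {m₀ : S} (hm₀ : (m₀:M)+α ∈ S) (m : S) (hm : (m:M)+α ∉ S) :
    demE S α D m₀ m = 0 := by
  have hmul : AddMonoidAlgebra.single (m+m₀) (1:k) =
      AddMonoidAlgebra.single m (1:k) * AddMonoidAlgebra.single m₀ (1:k) := by
    rw [AddMonoidAlgebra.single_mul_single, one_mul]
  have key : D (AddMonoidAlgebra.single (m+m₀) (1:k)) =
      AddMonoidAlgebra.single (⟨((m+m₀):S) + α, mem_shift hm₀ m⟩ : S) (demC S α D m₀) := by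
    rw [hmul, Derivation.leibniz, smul_eq_mul, smul_eq_mul,
      demD_of_mem hhom m₀ hm₀, demD_of_not_mem hhom m hm, mul_zero, add_zero,
      AddMonoidAlgebra.single_mul_single, one_mul]
    congr 1
    apply Subtype.ext; push_cast; abel
  rw [demD_of_mem hhom (m+m₀) (mem_shift hm₀ m)] at key
  have h3 := congrArg (fun f : AddMonoidAlgebra k S =>
    f.coeff (⟨((m+m₀):S) + α, mem_shift hm₀ m⟩ : S)) key
  simp only [AddMonoidAlgebra.coeff_single, Finsupp.single_eq_same] at h3
  unfold demE
  rw [h3]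
  ring

theorem iterate_smul_comm (n : ℕ) (c : k) (f : AddMonoidAlgebra k S) :
    (⇑D)^[n] (c • f) = c • (⇑D)^[n] f := by
  induction n generalizing f with
  | zero => rfl
  | succ n ih =>
    rw [Function.iterate_succ_apply, Function.iterate_succ_apply, Derivation.map_smul, ih]


theorem demE_shift
    (hhom : ∀ m : S, ∀ x ∈ (D (AddMonoidAlgebra.single m (1 : k))).coeff.support,
      (x : M) = (m : M) + α)
    {m₀ : S} (hm₀ : (m₀:M)+α ∈ S) (y : S) (hy : (y:M)+α ∈ S) :
    demE S α D m₀ (⟨(y:M)+α, hy⟩ : S) =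
      demE S α D m₀ y + demE S α D m₀ (⟨(m₀:M)+α, hm₀⟩ : S) - demE S α D m₀ m₀ := by
  have hkey : y + (⟨(m₀:M)+α, hm₀⟩ : S) = (⟨(y:M)+α, hy⟩ : S) + m₀ := by
    apply Subtype.ext; push_cast; abel
  have h1 := demE_add hhom hm₀ y (⟨(m₀:M)+α, hm₀⟩ : S)
  have h2 := demE_add hhom hm₀ (⟨(y:M)+α, hy⟩ : S) m₀
  rw [hkey, h2] at h1
  linear_combination h1

theorem demE_exists_nat
    (hhom : ∀ m : S, ∀ x ∈ (D (AddMonoidAlgebra.single m (1 : k))).coeff.support,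
      (x : M) = (m : M) + α)
    {m₀ : S} (hm₀ : (m₀:M)+α ∈ S) :
    ∀ (n : ℕ) (m : S), (⇑D)^[n] (AddMonoidAlgebra.single m (1:k)) = 0 →
      ∃ p : ℕ, demE S α D m₀ m =
        p • (demE S α D m₀ m₀ - demE S α D m₀ (⟨(m₀:M)+α, hm₀⟩ : S)) := by
  intro n
  induction n with
  | zero =>
    intro m h
    exfalso
    have := congrArg (fun f : AddMonoidAlgebra k S => f.coeff m) h
    simp at this
  | succ n ih =>
    intro m h
    by_cases hm : (m:M)+α ∈ S
    · by_cases hc : demC S α D m = 0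
      · exact ⟨0, by rw [demE_eq_demC hhom hm₀ m hm, hc]; simp⟩
      · rw [Function.iterate_succ_apply, demD_of_mem hhom m hm] at h
        have hs : AddMonoidAlgebra.single (⟨(m:M)+α, hm⟩:S) (demC S α D m)
            = demC S α D m • AddMonoidAlgebra.single (⟨(m:M)+α, hm⟩:S) (1:k) := by
          rw [AddMonoidAlgebra.smul_single', mul_one]
        rw [hs, iterate_smul_comm] at h
        have h0 : (⇑D)^[n] (AddMonoidAlgebra.single (⟨(m:M)+α, hm⟩:S) (1:k)) = 0 := by
          rcases smul_eq_zero.mp h with h' | h'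
          · exact absurd h' hc
          · exact h'
        obtain ⟨p, hp⟩ := ih (⟨(m:M)+α, hm⟩:S) h0
        refine ⟨p+1, ?_⟩
        have hsh := demE_shift hhom hm₀ m hm
        rw [hp] at hsh
        have hns : ∀ (q : ℕ) (x : k), q • x = (q:k) * x := fun q x => nsmul_eq_mul q x
        rw [hns] at hsh ⊢
        push_cast
        linear_combination -hsh
    · exact ⟨0, by rw [demE_zero_of_not_mem hhom hm₀ m hm]; simp⟩

end Aux

/-- Every nonzero homogeneous locally nilpotent derivation of
degree `α` on the semigroup algebra of a cancellative monoid `S` (inside its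
group of differences `M`) arises from a Demazure root: `α ∈ R(S)` and
`D = λ·∂_α` for some `λ ∈ k*`, where `∂_α(χ^m) = ρ(m)χ^{m+α}` for the
distinguished ray `ρ`. -/
theorem homogeneous_lnd_is_demazure_root_derivation
    {k M : Type*} [Field k] [IsAlgClosed k] [CharZero k] [AddCommGroup M]
    (S : AddSubmonoid M)
    (hgen : ∀ x : M, ∃ a ∈ S, ∃ b ∈ S, x = a - b)
    (D : Derivation k (AddMonoidAlgebra k S) (AddMonoidAlgebra k S)) (α : M)
    (hhom : ∀ m : S, ∀ x ∈ (D (AddMonoidAlgebra.single m (1 : k))).coeff.support,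
      (x : M) = (m : M) + α)
    (hlnd : ∀ f : AddMonoidAlgebra k S, ∃ n : ℕ, (⇑D)^[n] f = 0)
    (hne : D ≠ 0) :
    ∃ ρ : M →+ ℤ, IsDemazureRoot S ρ α ∧
      ∃ lam : k, lam ≠ 0 ∧
        (∀ (m : S) (h : (m : M) + α ∈ S),
          D (AddMonoidAlgebra.single m (1 : k)) =
            (lam * ((ρ (m : M) : ℤ) : k)) •
              AddMonoidAlgebra.single (⟨(m : M) + α, h⟩ : S) (1 : k)) ∧
        (∀ m : S, (m : M) + α ∉ S → D (AddMonoidAlgebra.single m (1 : k)) = 0) := by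
  classical
  -- Step 1: find m₀ with D(χ^{m₀}) ≠ 0
  have hex : ∃ m : S, D (AddMonoidAlgebra.single m (1:k)) ≠ 0 := by
    by_contra hall
    push_neg at hall
    apply hne
    apply Derivation.ext
    intro f
    rw [Derivation.zero_apply]
    induction f using AddMonoidAlgebra.induction_linear with
    | zero => simp
    | add f g hf hg => rw [map_add, hf, hg, add_zero]
    | single a b =>
      have hb : (AddMonoidAlgebra.single a b : AddMonoidAlgebra k S)
          = b • AddMonoidAlgebra.single a (1:k) := by
        rw [AddMonoidAlgebra.smul_single', mul_one]
      rw [hb, Derivation.map_smul]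
      rw [hall, smul_zero]
  obtain ⟨m₀, hm₀ne⟩ := hex
  have hm₀ : (m₀:M)+α ∈ S := by
    by_contra h
    exact hm₀ne (demD_of_not_mem hhom m₀ h)
  have hc₀ : demC S α D m₀ ≠ 0 := by
    intro h
    apply hm₀ne
    rw [demD_of_mem hhom m₀ hm₀, h]
    simp [AddMonoidAlgebra.single]
  set m₁ : S := (⟨(m₀:M)+α, hm₀⟩ : S) with hm₁def
  set lam : k := demE S α D m₀ m₀ - demE S α D m₀ m₁ with hlamdef
  -- Step 2: every degree is an integer multiple
  have hall : ∀ m : S, ∃ p : ℕ, demE S α D m₀ m = p • lam := by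
    intro m
    obtain ⟨n, hn⟩ := hlnd (AddMonoidAlgebra.single m (1:k))
    exact demE_exists_nat hhom hm₀ n m hn
  choose jf hjf using hall
  have he₀ : demE S α D m₀ m₀ = demC S α D m₀ := demE_eq_demC hhom hm₀ m₀ hm₀
  have hlam : lam ≠ 0 := by
    intro h
    have h2 := hjf m₀
    rw [h, smul_zero, he₀] at h2
    exact hc₀ h2
  have hJ : ∀ p q : ℕ, p • lam = q • lam → p = q := by
    intro p q h
    have h2 : (p:k) * lam = (q:k)*lam := by
      rw [← nsmul_eq_mul, ← nsmul_eq_mul]; exact h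
    exact_mod_cast mul_right_cancel₀ hlam h2
  have hjadd : ∀ a b : S, jf (a+b) = jf a + jf b := by
    intro a b
    apply hJ
    rw [← hjf (a+b), demE_add hhom hm₀, hjf a, hjf b, add_nsmul]
  have hshiftj : ∀ (y : S) (hy : (y:M)+α ∈ S), jf (⟨(y:M)+α, hy⟩:S) + 1 = jf y := by
    intro y hy
    apply hJ
    rw [succ_nsmul, ← hjf, ← hjf y]
    have hsh := demE_shift hhom hm₀ y hy
    rw [hlamdef]
    linear_combination hsh
  have hj0 : jf 0 = 0 := by
    have h00 := demE_add hhom hm₀ 0 0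
    rw [add_zero] at h00
    have : demE S α D m₀ 0 = 0 := by linear_combination -h00
    exact hJ _ _ (by rw [← hjf 0, this, zero_smul])
  have hjm₀ : jf m₀ ≠ 0 := by
    intro h
    have h2 := hjf m₀
    rw [h, zero_smul, he₀] at h2
    exact hc₀ h2
  -- Step 3: build ρ
  choose ga hga gb hgb hgx using hgen
  set F : M → ℤ := fun z => (jf ⟨ga z, hga z⟩ : ℤ) - (jf ⟨gb z, hgb z⟩ : ℤ) with hFdef
  have hFind : ∀ (z : M) (x y : S), z = (x:M) - y → F z = (jf x : ℤ) - jf y := by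
    intro z x y hz
    have hxy : (⟨ga z, hga z⟩ : S) + y = x + (⟨gb z, hgb z⟩ : S) := by
      apply Subtype.ext
      push_cast
      have h1 : ga z - gb z = (x:M) - (y:M) := (hgx z).symm.trans hz
      exact sub_eq_sub_iff_add_eq_add.mp h1
    have h2 : jf (⟨ga z, hga z⟩ : S) + jf y = jf x + jf (⟨gb z, hgb z⟩ : S) := by
      rw [← hjadd, ← hjadd, hxy]
    show (jf (⟨ga z, hga z⟩:S) : ℤ) - (jf (⟨gb z, hgb z⟩:S) : ℤ) = (jf x : ℤ) - jf y
    omega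
  have hFadd : ∀ z w, F (z+w) = F z + F w := by
    intro z w
    have hrep : z + w = (((⟨ga z, hga z⟩ + ⟨ga w, hga w⟩ : S)) : M)
        - (((⟨gb z, hgb z⟩ + ⟨gb w, hgb w⟩ : S)) : M) := by
      push_cast
      conv_lhs => rw [hgx z, hgx w]
      abel
    rw [hFind (z+w) _ _ hrep, hjadd, hjadd]
    show _ = ((jf (⟨ga z, hga z⟩:S) : ℤ) - (jf (⟨gb z, hgb z⟩:S) : ℤ))
      + ((jf (⟨ga w, hga w⟩:S) : ℤ) - (jf (⟨gb w, hgb w⟩:S) : ℤ))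
    push_cast
    ring
  set ρ : M →+ ℤ := AddMonoidHom.mk' F hFadd with hρdef
  have hρS : ∀ m : S, ρ (m:M) = jf m := by
    intro m
    have hrep : (m:M) = ((m:M)) - (((0:S)):M) := by simp
    have := hFind (m:M) m 0 hrep
    rw [hj0] at this
    simp at this; exact this
  -- ρ α = -1
  have hρα : ρ α = -1 := by
    have hrep : α = ((m₁:S):M) - ((m₀:S):M) := by
      show α = ((m₀:M)+α) - (m₀:M)
      abel
    have h1 := hFind α m₁ m₀ hrep
    have h2 := hshiftj m₀ hm₀
    rw [← hm₁def] at h2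
    show F α = -1
    rw [h1]
    omega
  -- Demazure condition
  have hdem : ∀ m : S, 0 < ρ (m:M) → (m:M)+α ∈ S := by
    intro m hpos
    by_contra h
    have h0 : demE S α D m₀ m = 0 := demE_zero_of_not_mem hhom hm₀ m h
    have hjm : jf m = 0 := hJ _ _ (by rw [← hjf m, h0, zero_smul])
    rw [hρS m, hjm] at hpos
    omega
  -- chain
  have hchain : ∀ (p:ℕ) (m : S), jf m = p → ∃ y : S, (y:M) = (m:M) + p • α ∧ jf y = 0 := by
    intro p
    induction p with
    | zero => intro m h; exact ⟨m, by simp, h⟩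
    | succ p ih =>
      intro m h
      have hpos : 0 < ρ (m:M) := by rw [hρS, h]; omega
      have hm' : (m:M)+α ∈ S := hdem m hpos
      have hj' : jf (⟨(m:M)+α, hm'⟩:S) = p := by
        have := hshiftj m hm'
        omega
      obtain ⟨y, hy1, hy0⟩ := ih _ hj'
      refine ⟨y, ?_, hy0⟩
      rw [hy1]
      push_cast
      rw [succ_nsmul]
      abel
  -- key: members of the dual vanishing on jf=0 are multiples of ρ
  have hkey : ∀ u : M →+ ℤ, u ∈ dualMonoid S → (∀ m : S, jf m = 0 → u (m:M) = 0) →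
      u ∈ AddSubmonoid.closure ({ρ} : Set (M →+ ℤ)) := by
    intro u hu h0
    have hm : ∀ m : S, u (m:M) = (jf m : ℤ) * (-(u α)) := by
      intro m
      obtain ⟨y, hy1, hy0⟩ := hchain (jf m) m rfl
      have h1 := h0 y hy0
      rw [hy1, map_add, map_nsmul] at h1
      have h2 : u (m:M) + (jf m : ℤ) * (u α) = 0 := by
        rw [← nsmul_eq_mul]; exact h1
      linarith
    have hα : 0 ≤ -(u α) := by
      have h1 : (0:ℤ) ≤ u (m₀:M) := hu (m₀:M) m₀.2
      rw [hm m₀] at h1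
      have hp : 0 < (jf m₀ : ℤ) := by omega
      nlinarith
    refine AddSubmonoid.mem_closure_singleton.mpr ⟨(-(u α)).toNat, ?_⟩
    ext z
    have huz : u z = (F z) * (-(u α)) := by
      have h2 : u z = u (ga z) - u (gb z) := by
        conv_lhs => rw [hgx z]
        rw [map_sub]
      rw [h2, hm ⟨ga z, hga z⟩, hm ⟨gb z, hgb z⟩]
      show _ = ((jf (⟨ga z, hga z⟩:S) : ℤ) - (jf (⟨gb z, hgb z⟩:S) : ℤ)) * (-(u α))
      ring
    have hcast : (((-(u α)).toNat : ℤ)) = -(u α) := Int.toNat_of_nonneg hα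
    show ((-(u α)).toNat • ρ) z = u z
    rw [AddMonoidHom.nsmul_apply, huz]
    show (-(u α)).toNat • (F z) = F z * (-(u α))
    rw [nsmul_eq_mul, hcast]
    ring
  -- face property
  have hρdual : ρ ∈ dualMonoid S := by
    intro m hmS
    have := hρS ⟨m, hmS⟩
    simp only at this
    rw [this]
    omega
  have hface : IsMonoidFace (AddSubmonoid.closure {ρ}) (dualMonoid S) := by
    constructor
    · rw [AddSubmonoid.closure_le]
      simpa using hρdual
    · intro u hu v hv huv
      rcases AddSubmonoid.mem_closure_singleton.mp huv with ⟨n, hn⟩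
      have h0 : ∀ m : S, jf m = 0 → u (m:M) = 0 ∧ v (m:M) = 0 := by
        intro m hm0
        have h1 := congrArg (fun w : M →+ ℤ => w (m:M)) hn
        simp only [AddMonoidHom.nsmul_apply, AddMonoidHom.add_apply] at h1
        rw [hρS m, hm0] at h1
        have h2 : u (m:M) + v (m:M) = 0 := by
          rw [← h1]; simp
        have h3 := hu (m:M) m.2
        have h4 := hv (m:M) m.2
        omega
      exact ⟨hkey u hu (fun m h => (h0 m h).1), hkey v hv (fun m h => (h0 m h).2)⟩
  -- formulas
  have hform : ∀ (m : S) (h : (m:M)+α ∈ S),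
      D (AddMonoidAlgebra.single m (1:k)) =
        (lam * ((ρ (m:M) : ℤ) : k)) • AddMonoidAlgebra.single (⟨(m:M)+α, h⟩:S) (1:k) := by
    intro m h
    rw [demD_of_mem hhom m h, AddMonoidAlgebra.smul_single', mul_one]
    congr 1
    have h1 : demC S α D m = demE S α D m₀ m := (demE_eq_demC hhom hm₀ m h).symm
    rw [h1, hjf m, hρS m, nsmul_eq_mul]
    push_cast
    ring
  refine ⟨ρ, ⟨⟨?_, hface⟩, hρα, ?_⟩, lam, hlam, hform, fun m h => demD_of_not_mem hhom m h⟩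
  · intro h
    rw [h] at hρα
    simp at hρα
  · intro m hmS hpos
    exact hdem ⟨m, hmS⟩ hpos
end

section
/- Let S be a finitely generated cancellative commutative monoid over a field k of characteristic zero, and ∂ : k[S] → k[S] a homogeneous locally nilpotent derivation. Then ker ∂ is a finitely generated k-algebra. -/
open Finset in
theorem iter_leibniz {R A : Type*} [CommSemiring R] [CommSemiring A] [Algebra R A]
    (D : Derivation R A A) (p q : A) (n : ℕ) :
    (⇑D)^[n] (p * q) =
      ∑ k ∈ range n.succ, (n.choose k • ((⇑D)^[n - k] p * (⇑D)^[k] q)) := by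
  induction n with
  | zero =>
    simp [Finset.range]
  | succ n IH =>
    calc
      (⇑D)^[n + 1] (p * q) =
          D (∑ k ∈ range n.succ,
              n.choose k • ((⇑D)^[n - k] p * (⇑D)^[k] q)) := by
        rw [Function.iterate_succ_apply', IH]
      _ = (∑ k ∈ range n.succ,
            n.choose k • ((⇑D)^[n - k + 1] p * (⇑D)^[k] q)) +
          ∑ k ∈ range n.succ,
            n.choose k • ((⇑D)^[n - k] p * (⇑D)^[k + 1] q) := by
        rw [map_sum]
        simp_rw [map_nsmul, Derivation.leibniz, smul_eq_mul, smul_add, sum_add_distrib,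
          Function.iterate_succ_apply', mul_comm]
        rw [add_comm]
      _ = (∑ k ∈ range n.succ,
                n.choose k.succ • ((⇑D)^[n - k] p * (⇑D)^[k + 1] q)) +
              1 • ((⇑D)^[n + 1] p * (⇑D)^[0] q) +
            ∑ k ∈ range n.succ, n.choose k • ((⇑D)^[n - k] p * (⇑D)^[k + 1] q) :=
        ?_
      _ = ((∑ k ∈ range n.succ, n.choose k • ((⇑D)^[n - k] p * (⇑D)^[k + 1] q)) +
              ∑ k ∈ range n.succ,
                n.choose k.succ • ((⇑D)^[n - k] p * (⇑D)^[k + 1] q)) +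
            1 • ((⇑D)^[n + 1] p * (⇑D)^[0] q) := by
        rw [add_comm, add_assoc]
      _ = (∑ i ∈ range n.succ,
              (n + 1).choose (i + 1) • ((⇑D)^[n + 1 - (i + 1)] p * (⇑D)^[i + 1] q)) +
            1 • ((⇑D)^[n + 1] p * (⇑D)^[0] q) := by
        simp_rw [Nat.choose_succ_succ, Nat.succ_sub_succ, add_smul, sum_add_distrib]
      _ = ∑ k ∈ range n.succ.succ,
            n.succ.choose k • ((⇑D)^[n.succ - k] p * (⇑D)^[k] q) := by
        rw [sum_range_succ' _ n.succ, Nat.choose_zero_right, tsub_zero]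
    congr
    refine (sum_range_succ' _ _).trans (congr_arg₂ (· + ·) ?_ ?_)
    · rw [sum_range_succ, Nat.choose_succ_self, zero_smul, add_zero]
      refine sum_congr rfl fun k hk => ?_
      rw [mem_range] at hk
      congr
      omega
    · rw [Nat.choose_zero_right, tsub_zero]

/-- The kernel of a homogeneous locally nilpotent derivation of
the semigroup algebra of a finitely generated cancellative commutative monoid
is a finitely generated `k`-algebra. -/
theorem kernel_of_homogeneous_lnd_fg
    {k S : Type*} [Field k] [CharZero k] [AddCancelCommMonoid S] [AddMonoid.FG S]
    (D : Derivation k (AddMonoidAlgebra k S) (AddMonoidAlgebra k S))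
    (hhom : ∀ m : S, ∃ (m' : S) (c : k),
      D (AddMonoidAlgebra.single m (1 : k)) = AddMonoidAlgebra.single m' c)
    (hlnd : ∀ f : AddMonoidAlgebra k S, ∃ n : ℕ, (⇑D)^[n] f = 0) :
    ∃ A : Subalgebra k (AddMonoidAlgebra k S),
      (A : Set (AddMonoidAlgebra k S)) = {f | D f = 0} ∧ A.FG := by
  classical
  choose φ c hφ using hhom
  -- iterates of zero
  have hiter0 : ∀ j : ℕ, (⇑D)^[j] 0 = 0 := by
    intro j; induction j with
    | zero => rfl
    | succ j ih => rw [Function.iterate_succ_apply, map_zero, ih]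
  have hiter_ge : ∀ (x : AddMonoidAlgebra k S) (n j : ℕ), (⇑D)^[n] x = 0 → n ≤ j →
      (⇑D)^[j] x = 0 := by
    intro x n j hx hnj
    obtain ⟨t, rfl⟩ := Nat.exists_eq_add_of_le hnj
    rw [add_comm, Function.iterate_add_apply, hx, hiter0]
  -- iterates of a monomial are monomials
  have hmono : ∀ (n : ℕ) (m : S), ∃ (p : S) (γ : k),
      (⇑D)^[n] (AddMonoidAlgebra.single m 1) = AddMonoidAlgebra.single p γ := by
    intro n m
    induction n with
    | zero => exact ⟨m, 1, rfl⟩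
    | succ n ih =>
      obtain ⟨p, γ, hp⟩ := ih
      refine ⟨φ p, γ * c p, ?_⟩
      rw [Function.iterate_succ_apply', hp,
        show AddMonoidAlgebra.single p γ = γ • AddMonoidAlgebra.single p (1:k) by
          rw [AddMonoidAlgebra.smul_single', mul_one],
        D.map_smul, hφ, AddMonoidAlgebra.smul_single']
  -- the face property
  have hface : ∀ m m' : S, D (AddMonoidAlgebra.single (m + m') (1:k)) = 0 →
      D (AddMonoidAlgebra.single m (1:k)) = 0 ∧ D (AddMonoidAlgebra.single m' (1:k)) = 0 := by
    intro m m' hmm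
    set a := AddMonoidAlgebra.single m (1:k) with ha
    set b := AddMonoidAlgebra.single m' (1:k) with hb
    have hab : a * b = AddMonoidAlgebra.single (m + m') (1:k) := by
      rw [ha, hb, AddMonoidAlgebra.single_mul_single, one_mul]
    have hDab : ∀ j : ℕ, 1 ≤ j → (⇑D)^[j] (a * b) = 0 := by
      intro j hj
      obtain ⟨t, rfl⟩ := Nat.exists_eq_add_of_le hj
      rw [add_comm, Function.iterate_add_apply, Function.iterate_one, hab, hmm, hiter0]
    -- nilpotency indices
    obtain ⟨na, hna⟩ := hlnd a
    obtain ⟨nb, hnb⟩ := hlnd b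
    have hane : a ≠ 0 := fun h => one_ne_zero (AddMonoidAlgebra.single_eq_zero.mp h)
    have hbne : b ≠ 0 := fun h => one_ne_zero (AddMonoidAlgebra.single_eq_zero.mp h)
    -- largest index with nonzero iterate
    have key : ∀ (x : AddMonoidAlgebra k S) (mx : S), x = AddMonoidAlgebra.single mx 1 →
        (∃ nx, (⇑D)^[nx] x = 0) → ∃ n : ℕ, (⇑D)^[n] x ≠ 0 ∧ (⇑D)^[n+1] x = 0 := by
      intro x mx hx hex
      have h0 : (⇑D)^[0] x ≠ 0 := by
        rw [hx]; exact fun h => one_ne_zero (AddMonoidAlgebra.single_eq_zero.mp h)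
      let N := Nat.find hex
      have hN : (⇑D)^[N] x = 0 := Nat.find_spec hex
      have hNpos : 1 ≤ N := by
        rcases Nat.eq_zero_or_pos N with h | h
        · exact absurd (h ▸ hN) h0
        · exact h
      refine ⟨N - 1, ?_, ?_⟩
      · exact Nat.find_min hex (Nat.sub_lt hNpos one_pos)
      · rwa [Nat.sub_add_cancel hNpos]
    obtain ⟨n, hn, hn1⟩ := key a m ha ⟨na, hna⟩
    obtain ⟨p, hp, hp1⟩ := key b m' hb ⟨nb, hnb⟩
    -- if both n = 0 and p = 0 we are done
    rcases Nat.eq_zero_or_pos (n + p) with hnp | hnp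
    · obtain ⟨h1, h2⟩ := Nat.add_eq_zero.mp hnp
      subst h1; subst h2
      exact ⟨hn1, hp1⟩
    exfalso
    have hsum := iter_leibniz D a b (n + p)
    rw [hDab (n + p) hnp] at hsum
    have hsum2 : (0 : AddMonoidAlgebra k S) = (n+p).choose p • ((⇑D)^[n] a * (⇑D)^[p] b) := by
      rw [hsum]
      rw [Finset.sum_eq_single_of_mem p (Finset.mem_range.mpr (by omega))]
      · rw [Nat.add_sub_cancel]
      · intro j hj hjp
        rcases lt_or_gt_of_ne hjp with h | h
        · rw [hiter_ge a (n+1) (n+p-j) hn1 (by omega), zero_mul, smul_zero]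
        · rw [hiter_ge b (p+1) j hp1 (by omega), mul_zero, smul_zero]
    obtain ⟨α, γ, hα⟩ := hmono n m
    obtain ⟨β, δ, hβ⟩ := hmono p m'
    rw [← ha] at hα; rw [← hb] at hβ
    have hγ : γ ≠ 0 := fun h => hn (by rw [hα, h]; exact AddMonoidAlgebra.single_eq_zero.mpr rfl)
    have hδ : δ ≠ 0 := fun h => hp (by rw [hβ, h]; exact AddMonoidAlgebra.single_eq_zero.mpr rfl)
    rw [hα, hβ, AddMonoidAlgebra.single_mul_single,
      ← Nat.cast_smul_eq_nsmul k, AddMonoidAlgebra.smul_single'] at hsum2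
    have hcoef : ((n+p).choose p : k) * (γ * δ) = 0 :=
      AddMonoidAlgebra.single_eq_zero.mp hsum2.symm
    rcases mul_eq_zero.mp hcoef with h | h
    · exact Nat.cast_ne_zero.mpr (Nat.choose_pos (Nat.le_add_left p n)).ne' h
    · exact mul_ne_zero hγ hδ h
  -- the kernel as a subalgebra
  refine ⟨{ carrier := {f | D f = 0}
            mul_mem' := ?_
            one_mem' := ?_
            add_mem' := ?_
            zero_mem' := ?_
            algebraMap_mem' := ?_ }, rfl, ?_⟩
  · intro x y hx hy
    simp only [Set.mem_setOf_eq] at *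
    rw [Derivation.leibniz, hx, hy, smul_zero, smul_zero, add_zero]
  · exact D.map_one_eq_zero
  · intro x y hx hy
    simp only [Set.mem_setOf_eq] at *
    rw [map_add, hx, hy, add_zero]
  · exact map_zero D
  · intro r; exact D.map_algebraMap r
  -- finite generation
  obtain ⟨G, hG⟩ := (AddMonoid.FG.fg_top : (⊤ : AddSubmonoid S).FG)
  set T : Finset S := G.filter (fun g => D (AddMonoidAlgebra.single g (1:k)) = 0) with hT
  refine ⟨T.image (fun t => AddMonoidAlgebra.single t (1:k)), ?_⟩
  apply le_antisymm
  · apply Algebra.adjoin_le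
    intro x hx
    simp only [Finset.coe_image, Set.mem_image, Finset.mem_coe, hT, Finset.mem_filter] at hx
    obtain ⟨t, ⟨_, ht⟩, rfl⟩ := hx
    exact ht
  · -- every kernel element lies in the adjoin
    intro f hf
    have hf' : D f = 0 := hf
    -- supports of kernel elements are in F
    have hsupp : ∀ m ∈ f.coeff.support, D (AddMonoidAlgebra.single m (1:k)) = 0 := by
      intro m hm
      by_contra hcm
      have hcm' : c m ≠ 0 := fun h => hcm (by
        rw [hφ m, h]; exact AddMonoidAlgebra.single_eq_zero.mpr rfl)
      have hfm : f.coeff m ≠ 0 := Finsupp.mem_support_iff.mp hm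
      have hDf : D f = ∑ m' ∈ f.coeff.support,
          AddMonoidAlgebra.single (φ m') (f.coeff m' * c m') := by
        conv_lhs => rw [← AddMonoidAlgebra.sum_coeff_single f, Finsupp.sum, map_sum]
        refine Finset.sum_congr rfl fun m' _ => ?_
        have h1 : (AddMonoidAlgebra.single m' (f.coeff m') : AddMonoidAlgebra k S)
            = f.coeff m' • AddMonoidAlgebra.single m' (1:k) := by
          rw [AddMonoidAlgebra.smul_single', mul_one]
        rw [h1, D.map_smul, hφ m', AddMonoidAlgebra.smul_single']
      have hz : ∀ m' ∈ f.coeff.support, m' ≠ m →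
          (AddMonoidAlgebra.single (φ m') (f.coeff m' * c m') : AddMonoidAlgebra k S).coeff (φ m) = 0 := by
        intro m' _ hm'ne
        rcases eq_or_ne (φ m') (φ m) with hee | hee
        · rcases eq_or_ne (c m') 0 with h | h
          · rw [h, mul_zero]; simp
          · exfalso
            have hexp2 : (AddMonoidAlgebra.single (φ (m + m')) (c (m + m'))
                  : AddMonoidAlgebra k S) =
                AddMonoidAlgebra.single (m + φ m') (c m') +
                AddMonoidAlgebra.single (m' + φ m) (c m) := by
              rw [← hφ (m + m'),
                show AddMonoidAlgebra.single (m + m') (1:k) =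
                  AddMonoidAlgebra.single m 1 * AddMonoidAlgebra.single m' 1 by
                  rw [AddMonoidAlgebra.single_mul_single, one_mul],
                Derivation.leibniz, smul_eq_mul, smul_eq_mul, hφ m, hφ m',
                AddMonoidAlgebra.single_mul_single, AddMonoidAlgebra.single_mul_single,
                one_mul, one_mul]
            have hne2 : m + φ m' ≠ m' + φ m := by
              rw [hee]
              intro h'
              exact hm'ne (add_right_cancel h').symm
            have h1 : (AddMonoidAlgebra.single (φ (m + m')) (c (m + m'))
                : AddMonoidAlgebra k S).coeff (m + φ m') = c m' := by
              rw [hexp2, AddMonoidAlgebra.coeff_add, Finsupp.add_apply, AddMonoidAlgebra.coeff_single,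
                AddMonoidAlgebra.coeff_single, Finsupp.single_eq_same,
                Finsupp.single_eq_of_ne' (Ne.symm hne2), add_zero]
            have h2 : (AddMonoidAlgebra.single (φ (m + m'))
                (c (m + m')) : AddMonoidAlgebra k S).coeff (m' + φ m) = c m := by
              rw [hexp2, AddMonoidAlgebra.coeff_add, Finsupp.add_apply, AddMonoidAlgebra.coeff_single,
                AddMonoidAlgebra.coeff_single, Finsupp.single_eq_same,
                Finsupp.single_eq_of_ne' hne2, zero_add]
            have e1 : φ (m + m') = m + φ m' := by
              by_contra hne
              rw [AddMonoidAlgebra.coeff_single, Finsupp.single_eq_of_ne' hne] at h1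
              exact h h1.symm
            have e2 : φ (m + m') = m' + φ m := by
              by_contra hne
              rw [AddMonoidAlgebra.coeff_single, Finsupp.single_eq_of_ne' hne] at h2
              exact hcm' h2.symm
            exact hne2 (e1 ▸ e2)
        · exact Finsupp.single_eq_of_ne' hee
      have heval : (0:k) = ∑ m' ∈ f.coeff.support,
          (AddMonoidAlgebra.single (φ m') (f.coeff m' * c m') : AddMonoidAlgebra k S).coeff (φ m) := by
        have h2 : (∑ m' ∈ f.coeff.support,
            (AddMonoidAlgebra.single (φ m') (f.coeff m' * c m') : AddMonoidAlgebra k S)).coeff (φ m)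
            = ∑ m' ∈ f.coeff.support,
            (AddMonoidAlgebra.single (φ m') (f.coeff m' * c m') : AddMonoidAlgebra k S).coeff (φ m) := by
          rw [AddMonoidAlgebra.coeff_sum]; exact map_sum (Finsupp.applyAddHom (φ m)) _ _
        rw [← h2, ← hDf, hf']
        rfl
      rw [Finset.sum_eq_single_of_mem m hm hz, AddMonoidAlgebra.coeff_single, Finsupp.single_eq_same] at heval
      exact (mul_ne_zero hfm hcm') heval.symm
    -- now rebuild f from monomials with exponents in the closure of T
    have hmemT : ∀ m ∈ f.coeff.support, m ∈ AddSubmonoid.closure (T : Set S) := by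
      intro m hm
      have hmtop : m ∈ AddSubmonoid.closure (G : Set S) := by rw [hG]; trivial
      obtain ⟨l, hl, hlsum⟩ := AddSubmonoid.exists_list_of_mem_closure hmtop
      have hface_list : ∀ l' : List S, (∀ y ∈ l', y ∈ G) →
          D (AddMonoidAlgebra.single l'.sum (1:k)) = 0 →
          l'.sum ∈ AddSubmonoid.closure (T : Set S) := by
        intro l'
        induction l' with
        | nil => intro _ _; exact AddSubmonoid.zero_mem _
        | cons x xs ih =>
          intro hmem hker
          rw [List.sum_cons] at hker ⊢
          obtain ⟨hx, hxs⟩ := hface x xs.sum hker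
          refine AddSubmonoid.add_mem _ ?_ (ih (fun y hy => hmem y (List.mem_cons_of_mem x hy)) hxs)
          apply AddSubmonoid.subset_closure
          simp only [hT, Finset.coe_filter, Set.mem_setOf_eq]
          exact ⟨hmem x (List.mem_cons_self (a := x) (l := xs)), hx⟩
      rw [← hlsum]
      exact hface_list l hl (hlsum ▸ hsupp m hm)
    -- single m 1 ∈ adjoin for m in closure T
    have hadj : ∀ m ∈ AddSubmonoid.closure (T : Set S),
        AddMonoidAlgebra.single m (1:k) ∈
          Algebra.adjoin k ((T.image (fun t => AddMonoidAlgebra.single t (1:k)) : Finset _) :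
            Set (AddMonoidAlgebra k S)) := by
      intro m hm
      induction hm using AddSubmonoid.closure_induction with
      | mem x hx =>
        apply Algebra.subset_adjoin
        simp only [Finset.coe_image, Set.mem_image, Finset.mem_coe]
        exact ⟨x, hx, rfl⟩
      | zero => rw [← AddMonoidAlgebra.one_def]; exact Subalgebra.one_mem _
      | add x y hx hy ihx ihy =>
        have : AddMonoidAlgebra.single (x + y) (1:k) =
            AddMonoidAlgebra.single x 1 * AddMonoidAlgebra.single y 1 := by
          rw [AddMonoidAlgebra.single_mul_single, one_mul]
        rw [this]
        exact Subalgebra.mul_mem _ ihx ihy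
    -- conclude
    have : f = ∑ m ∈ f.coeff.support, (f.coeff m) • AddMonoidAlgebra.single m (1:k) := by
      conv_lhs => rw [← AddMonoidAlgebra.sum_coeff_single f, Finsupp.sum]
      refine Finset.sum_congr rfl fun m _ => ?_
      rw [AddMonoidAlgebra.smul_single', mul_one]
    rw [this]
    exact Subalgebra.sum_mem _ fun m hm =>
      Subalgebra.smul_mem _ (hadj m (hmemT m hm)) _
end
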